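/- arXiv:1607.03311 — 6 statements merged into one kernel-verified Lean document; each statement's English description precedes it below -/
import Mathlib

section
/- Let f ∈ C[0,1] and let Q be continuous on Δ = {(t,τ): 0 ≤ τ < t ≤ 1} with |Q(t,τ)| ≤ c(t-τ)^{-ν} for constants c > 0 and 0 < ν < 1. Then the Volterra integral equation of the second kind u(t) = ∫_0^t Q(t,τ) u(τ) dτ + f(t) has a unique solution u ∈ C[0,1]. -/
open Set MeasureTheory intervalIntegral Filter Topology

noncomputable def vext (u : C(Icc (0:ℝ) 1, ℝ)) : ℝ → ℝ :=
  fun τ => u (projIcc 0 1 (by norm_num) τ)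

lemma vext_continuous (u : C(Icc (0:ℝ) 1, ℝ)) : Continuous (vext u) :=
  u.continuous.comp continuous_projIcc

lemma vext_abs_le (u : C(Icc (0:ℝ) 1, ℝ)) (τ : ℝ) : |vext u τ| ≤ ‖u‖ := by
  simpa [Real.norm_eq_abs, vext] using u.norm_coe_le_norm (projIcc 0 1 (by norm_num) τ)

lemma vext_coe (u : C(Icc (0:ℝ) 1, ℝ)) {τ : ℝ} (h0 : 0 ≤ τ) (h1 : τ ≤ 1) (s : Icc (0:ℝ) 1)
    (hs : (s : ℝ) = τ) : vext u τ = u s := by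
  unfold vext
  congr 1
  ext
  simp only [projIcc, hs.symm]
  rw [inf_eq_right.2 s.2.2, sup_eq_right.2 s.2.1]

lemma ae_ne_vol (b : ℝ) : ∀ᵐ τ : ℝ, τ ≠ b := by
  refine MeasureTheory.ae_iff.2 ?_
  simp

lemma sing_intable {ν : ℝ} (hν1 : ν < 1) (t a b : ℝ) :
    IntervalIntegrable (fun τ => (t - τ) ^ (-ν)) volume a b := by
  have h := (intervalIntegral.intervalIntegrable_rpow' (r := -ν) (a := t - a) (b := t - b)
    (by linarith)).comp_sub_left t
  simpa using h

lemma sing_val {ν : ℝ} (hν1 : ν < 1) {t a b : ℝ} (hab : a ≤ b) (hbt : b ≤ t) :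
    ∫ τ in a..b, (t - τ) ^ (-ν) = ((t - a) ^ (1 - ν) - (t - b) ^ (1 - ν)) / (1 - ν) := by
  rw [intervalIntegral.integral_comp_sub_left (fun s => s ^ (-ν)) t,
    integral_rpow (Or.inl (by linarith))]
  rw [show -ν + 1 = 1 - ν by ring]

section Kern

variable {Q : ℝ → ℝ → ℝ} {c ν : ℝ}

lemma Qrow_contOn (hQcont : ContinuousOn (fun p : ℝ × ℝ => Q p.1 p.2)
      {p : ℝ × ℝ | 0 ≤ p.2 ∧ p.2 < p.1 ∧ p.1 ≤ 1}) {t : ℝ} (ht1 : t ≤ 1) :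
    ContinuousOn (fun τ => Q t τ) (Ico 0 t) := by
  have hmap : MapsTo (fun τ : ℝ => (t, τ)) (Ico 0 t)
      {p : ℝ × ℝ | 0 ≤ p.2 ∧ p.2 < p.1 ∧ p.1 ≤ 1} := fun τ hτ => ⟨hτ.1, hτ.2, ht1⟩
  exact hQcont.comp ((Continuous.prodMk_right t).continuousOn) hmap

lemma K_aesm (hQcont : ContinuousOn (fun p : ℝ × ℝ => Q p.1 p.2)
      {p : ℝ × ℝ | 0 ≤ p.2 ∧ p.2 < p.1 ∧ p.1 ≤ 1}) {t : ℝ} (ht1 : t ≤ 1)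
    {h : ℝ → ℝ} (hh : Continuous h) {s : Set ℝ} (hs : s ⊆ Ico 0 t) (hsm : MeasurableSet s) :
    AEStronglyMeasurable (fun τ => Q t τ * h τ) (volume.restrict s) := by
  have h1 : ContinuousOn (fun τ => Q t τ * h τ) (Ico 0 t) :=
    (Qrow_contOn hQcont ht1).mul hh.continuousOn
  exact ((h1.mono hs).aestronglyMeasurable hsm)

lemma K_intable (hc : 0 < c) (hν0 : 0 < ν) (hν1 : ν < 1)
    (hQcont : ContinuousOn (fun p : ℝ × ℝ => Q p.1 p.2)
      {p : ℝ × ℝ | 0 ≤ p.2 ∧ p.2 < p.1 ∧ p.1 ≤ 1})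
    (hQbound : ∀ t τ : ℝ, 0 ≤ τ → τ < t → t ≤ 1 → |Q t τ| ≤ c * (t - τ) ^ (-ν))
    {t a b M : ℝ} {h : ℝ → ℝ} (hh : Continuous h) (hbd : ∀ τ, |h τ| ≤ M)
    (h0 : 0 ≤ a) (hab : a ≤ b) (hbt : b ≤ t) (ht1 : t ≤ 1) :
    IntervalIntegrable (fun τ => Q t τ * h τ) volume a b := by
  rw [intervalIntegrable_iff_integrableOn_Ioc_of_le hab]
  have hmaj : IntegrableOn (fun τ => (c * M) * (t - τ) ^ (-ν)) (Ioc a b) volume := by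
    rw [← intervalIntegrable_iff_integrableOn_Ioc_of_le hab]
    exact (sing_intable hν1 t a b).const_mul _
  have hsub : Ioc a b ⊆ Ico 0 t ∪ {t} := by
    intro τ hτ
    rcases eq_or_lt_of_le (hτ.2.trans hbt) with he | hlt
    · exact Or.inr (by simp [he])
    · exact Or.inl ⟨h0.trans hτ.1.le, hlt⟩
  have haesm : AEStronglyMeasurable (fun τ => Q t τ * h τ) (volume.restrict (Ioc a b)) := by
    have h1 : AEStronglyMeasurable (fun τ => Q t τ * h τ) (volume.restrict (Ioo a (min b t))) := by
      refine K_aesm hQcont ht1 hh ?_ measurableSet_Ioo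
      intro τ hτ
      exact ⟨h0.trans hτ.1.le, hτ.2.trans_le (min_le_right _ _)⟩
    have heq : volume.restrict (Ioc a b) = volume.restrict (Ioo a (min b t)) := by
      rcases eq_or_lt_of_le hbt with he | hlt
      · rw [he, min_self]
        exact Measure.restrict_congr_set (Ioo_ae_eq_Ioc (a := a) (b := t)).symm
      · rw [min_eq_left hbt]
        exact Measure.restrict_congr_set (Ioo_ae_eq_Ioc (a := a) (b := b)).symm
    rw [heq]
    exact h1
  refine Integrable.mono hmaj haesm ?_
  filter_upwards [ae_restrict_mem measurableSet_Ioc, (ae_restrict_iff' measurableSet_Ioc).2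
    ((ae_ne_vol t).mono fun τ hτ _ => hτ)] with τ hτ hne
  have hτt : τ < t := lt_of_le_of_ne (hτ.2.trans hbt) hne
  have h0τ : 0 ≤ τ := h0.trans hτ.1.le
  have hb1 : |Q t τ| ≤ c * (t - τ) ^ (-ν) := hQbound t τ h0τ hτt ht1
  have hM : 0 ≤ M := (abs_nonneg _).trans (hbd 0)
  rw [Real.norm_eq_abs, Real.norm_eq_abs, abs_mul]
  have : |Q t τ| * |h τ| ≤ (c * (t - τ) ^ (-ν)) * M :=
    mul_le_mul hb1 (hbd τ) (abs_nonneg _) (mul_nonneg hc.le (Real.rpow_nonneg (by linarith) _))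
  calc |Q t τ| * |h τ| ≤ (c * (t - τ) ^ (-ν)) * M := this
    _ ≤ |c * M * (t - τ) ^ (-ν)| := by
        rw [abs_of_nonneg (mul_nonneg (mul_nonneg hc.le hM) (Real.rpow_nonneg (by linarith) _))]; ring_nf; exact le_rfl

lemma integral_abs_bound {f φ : ℝ → ℝ} {a b : ℝ} (hab : a ≤ b)
    (hfi : IntervalIntegrable f volume a b) (hφ : IntervalIntegrable φ volume a b)
    (hbd : ∀ τ ∈ Ico a b, |f τ| ≤ φ τ) :
    |∫ τ in a..b, f τ| ≤ ∫ τ in a..b, φ τ := by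
  refine (intervalIntegral.abs_integral_le_integral_abs hab).trans ?_
  rw [intervalIntegral.integral_of_le hab, intervalIntegral.integral_of_le hab]
  refine setIntegral_mono_ae_restrict hfi.abs.1 ?_ ?_
  · exact (intervalIntegrable_iff_integrableOn_Ioc_of_le hab).1 hφ
  · filter_upwards [ae_restrict_mem measurableSet_Ioc, (ae_restrict_iff' measurableSet_Ioc).2
      ((ae_ne_vol b).mono fun τ hτ _ => hτ)] with τ hτ hne
    exact hbd τ ⟨hτ.1.le, lt_of_le_of_ne hτ.2 hne⟩

end Kern

lemma exp_integral_eval {lam a b : ℝ} (hlam : 0 < lam) :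
    ∫ τ in a..b, Real.exp (lam * τ) = (Real.exp (lam * b) - Real.exp (lam * a)) / lam := by
  rw [intervalIntegral.integral_comp_mul_left (fun x => Real.exp x) (ne_of_gt hlam),
    integral_exp, smul_eq_mul]
  field_simp

lemma weight_bound {ν : ℝ} (hν0 : 0 < ν) (hν1 : ν < 1) {lam t : ℝ} (hlam : 1 ≤ lam)
    (ht0 : 0 ≤ t) (ht1 : t ≤ 1) :
    ∫ τ in (0:ℝ)..t, (t - τ) ^ (-ν) * Real.exp (lam * τ)
      ≤ lam ^ (ν - 1) * (1 / (1 - ν) + 1) * Real.exp (lam * t) := by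
  have hlam0 : 0 < lam := lt_of_lt_of_le one_pos hlam
  have h1ν : 0 < 1 - ν := by linarith
  have hinv : (lam⁻¹) ^ (1 - ν) = lam ^ (ν - 1) := by
    rw [Real.inv_rpow hlam0.le, ← Real.rpow_neg hlam0.le]
    norm_num
  have hA0 : 0 ≤ lam ^ (ν - 1) := Real.rpow_nonneg hlam0.le _
  have hexp0 : (0:ℝ) < Real.exp (lam * t) := Real.exp_pos _
  -- integrability facts
  have hint : ∀ a b : ℝ, IntervalIntegrable
      (fun τ => (t - τ) ^ (-ν) * Real.exp (lam * τ)) volume a b := fun a b =>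
    (sing_intable hν1 t a b).mul_continuousOn (Real.continuous_exp.comp
      (continuous_const.mul continuous_id)).continuousOn
  have hintc : ∀ a b : ℝ, IntervalIntegrable
      (fun τ => (t - τ) ^ (-ν) * Real.exp (lam * t)) volume a b := fun a b =>
    (sing_intable hν1 t a b).mul_const _
  rcases le_or_gt t lam⁻¹ with hcase | hcase
  · -- small t
    have h1 : ∫ τ in (0:ℝ)..t, (t - τ) ^ (-ν) * Real.exp (lam * τ)
        ≤ ∫ τ in (0:ℝ)..t, (t - τ) ^ (-ν) * Real.exp (lam * t) := by
      refine intervalIntegral.integral_mono_on ht0 (hint 0 t) (hintc 0 t) ?_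
      intro τ hτ
      exact mul_le_mul_of_nonneg_left (Real.exp_le_exp.2
        (mul_le_mul_of_nonneg_left hτ.2 hlam0.le)) (Real.rpow_nonneg (by linarith [hτ.2]) _)
    rw [intervalIntegral.integral_mul_const, sing_val hν1 ht0 le_rfl] at h1
    simp only [sub_zero, sub_self] at h1
    rw [Real.zero_rpow (ne_of_gt h1ν)] at h1
    refine h1.trans ?_
    have ht' : t ^ (1 - ν) ≤ lam ^ (ν - 1) := by
      rw [← hinv]
      exact Real.rpow_le_rpow ht0 hcase h1ν.le
    have hstep : (t ^ (1 - ν) - 0) / (1 - ν) ≤ lam ^ (ν - 1) * (1 / (1 - ν) + 1) := by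
      rw [sub_zero]
      have h2 : t ^ (1 - ν) / (1 - ν) ≤ lam ^ (ν - 1) / (1 - ν) :=
        by gcongr
      calc t ^ (1 - ν) / (1 - ν) ≤ lam ^ (ν - 1) / (1 - ν) := h2
        _ ≤ lam ^ (ν - 1) * (1 / (1 - ν) + 1) := by
            rw [mul_add, mul_one, mul_one_div]
            linarith [hA0]
    exact mul_le_mul_of_nonneg_right hstep hexp0.le
  · -- large t : split at m = t - lam⁻¹
    set m := t - lam⁻¹ with hm
    have hm0 : 0 < m := by simp [hm]; linarith
    have hmt : m < t := by simp [hm]; positivity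
    have hsplit : ∫ τ in (0:ℝ)..t, (t - τ) ^ (-ν) * Real.exp (lam * τ)
        = (∫ τ in (0:ℝ)..m, (t - τ) ^ (-ν) * Real.exp (lam * τ))
          + ∫ τ in m..t, (t - τ) ^ (-ν) * Real.exp (lam * τ) :=
      (intervalIntegral.integral_add_adjacent_intervals (hint 0 m) (hint m t)).symm
    have hb1 : ∫ τ in (0:ℝ)..m, (t - τ) ^ (-ν) * Real.exp (lam * τ)
        ≤ lam ^ (ν - 1) * Real.exp (lam * t) := by
      have hstep : ∫ τ in (0:ℝ)..m, (t - τ) ^ (-ν) * Real.exp (lam * τ)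
          ≤ ∫ τ in (0:ℝ)..m, lam ^ ν * Real.exp (lam * τ) := by
        refine intervalIntegral.integral_mono_on hm0.le (hint 0 m)
          ((Real.continuous_exp.comp (continuous_const.mul continuous_id)).intervalIntegrable
            0 m |>.const_mul _) ?_
        intro τ hτ
        have h2 : lam⁻¹ ≤ t - τ := by simp [hm] at hτ ⊢; linarith [hτ.2]
        have h3 : (t - τ) ^ (-ν) ≤ (lam⁻¹) ^ (-ν) :=
          Real.rpow_le_rpow_of_nonpos (by positivity) h2 (by linarith)
        have h4 : (lam⁻¹) ^ (-ν) = lam ^ ν := by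
          rw [Real.inv_rpow hlam0.le, ← Real.rpow_neg hlam0.le]
          norm_num
        exact mul_le_mul_of_nonneg_right (h4 ▸ h3) (Real.exp_pos _).le
      rw [intervalIntegral.integral_const_mul, exp_integral_eval hlam0] at hstep
      refine hstep.trans ?_
      have hlm : lam * m = lam * t - 1 := by
        rw [hm]; field_simp
      rw [hlm]
      have h5 : Real.exp (lam * t - 1) - Real.exp (lam * 0) ≤ Real.exp (lam * t) := by
        have := Real.exp_pos (lam * 0)
        have h6 : Real.exp (lam * t - 1) ≤ Real.exp (lam * t) :=
          Real.exp_le_exp.2 (by linarith)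
        linarith
      calc lam ^ ν * ((Real.exp (lam * t - 1) - Real.exp (lam * 0)) / lam)
          ≤ lam ^ ν * (Real.exp (lam * t) / lam) := by
            refine mul_le_mul_of_nonneg_left ?_ (Real.rpow_nonneg hlam0.le _)
            exact div_le_div_of_nonneg_right h5 hlam0.le
        _ = lam ^ (ν - 1) * Real.exp (lam * t) := by
            rw [Real.rpow_sub hlam0, Real.rpow_one]
            ring
    have hb2 : ∫ τ in m..t, (t - τ) ^ (-ν) * Real.exp (lam * τ)
        ≤ lam ^ (ν - 1) * (1 / (1 - ν)) * Real.exp (lam * t) := by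
      have hstep : ∫ τ in m..t, (t - τ) ^ (-ν) * Real.exp (lam * τ)
          ≤ ∫ τ in m..t, (t - τ) ^ (-ν) * Real.exp (lam * t) := by
        refine intervalIntegral.integral_mono_on hmt.le (hint m t) (hintc m t) ?_
        intro τ hτ
        exact mul_le_mul_of_nonneg_left (Real.exp_le_exp.2
          (mul_le_mul_of_nonneg_left hτ.2 hlam0.le)) (Real.rpow_nonneg (by linarith [hτ.2]) _)
      rw [intervalIntegral.integral_mul_const, sing_val hν1 hmt.le le_rfl] at hstep
      simp only [sub_self] at hstep
      rw [Real.zero_rpow (ne_of_gt h1ν)] at hstep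
      have htm : t - m = lam⁻¹ := by rw [hm]; ring
      rw [htm, hinv, sub_zero] at hstep
      refine hstep.trans ?_
      rw [mul_one_div, div_eq_mul_one_div]
    rw [hsplit]
    calc (∫ τ in (0:ℝ)..m, (t - τ) ^ (-ν) * Real.exp (lam * τ))
          + ∫ τ in m..t, (t - τ) ^ (-ν) * Real.exp (lam * τ)
        ≤ lam ^ (ν - 1) * Real.exp (lam * t)
          + lam ^ (ν - 1) * (1 / (1 - ν)) * Real.exp (lam * t) := add_le_add hb1 hb2
      _ = lam ^ (ν - 1) * (1 / (1 - ν) + 1) * Real.exp (lam * t) := by ring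

section Cont

variable {Q : ℝ → ℝ → ℝ} {c ν : ℝ}

lemma G_contOn (hc : 0 < c) (hν0 : 0 < ν) (hν1 : ν < 1)
    (hQcont : ContinuousOn (fun p : ℝ × ℝ => Q p.1 p.2)
      {p : ℝ × ℝ | 0 ≤ p.2 ∧ p.2 < p.1 ∧ p.1 ≤ 1})
    (hQbound : ∀ t τ : ℝ, 0 ≤ τ → τ < t → t ≤ 1 → |Q t τ| ≤ c * (t - τ) ^ (-ν))
    (u : C(Icc (0:ℝ) 1, ℝ)) {δ : ℝ} (hδ : 0 < δ) :
    ContinuousOn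
      (fun t => ∫ τ, (Ioo 0 (t - δ)).indicator (fun τ' => Q t τ' * vext u τ') τ)
      (Icc 0 1) := by
  intro t₀ ht₀
  have hM0 : (0:ℝ) ≤ ‖u‖ := norm_nonneg u
  refine continuousWithinAt_of_dominated
    (bound := (Ioo (0:ℝ) 1).indicator (fun _ => c * δ ^ (-ν) * ‖u‖)) ?_ ?_ ?_ ?_
  · filter_upwards [self_mem_nhdsWithin] with t ht
    rw [aestronglyMeasurable_indicator_iff measurableSet_Ioo]
    refine K_aesm hQcont ht.2 (vext_continuous u) ?_ measurableSet_Ioo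
    intro τ hτ
    exact ⟨hτ.1.le, by linarith [hτ.2]⟩
  · filter_upwards [self_mem_nhdsWithin] with t ht
    refine Eventually.of_forall fun τ => ?_
    by_cases hτ : τ ∈ Ioo 0 (t - δ)
    · rw [indicator_of_mem hτ]
      have hτ1 : τ ∈ Ioo (0:ℝ) 1 := ⟨hτ.1, by linarith [hτ.2, ht.2]⟩
      rw [indicator_of_mem hτ1]
      have h1 : |Q t τ| ≤ c * (t - τ) ^ (-ν) := hQbound t τ hτ.1.le (by linarith [hτ.2]) ht.2
      have h2 : (t - τ) ^ (-ν) ≤ δ ^ (-ν) :=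
        Real.rpow_le_rpow_of_nonpos hδ (by linarith [hτ.2]) (by linarith)
      rw [Real.norm_eq_abs, abs_mul]
      have hr0 : (0:ℝ) ≤ (t - τ) ^ (-ν) := Real.rpow_nonneg (by linarith [hτ.2]) _
      calc |Q t τ| * |vext u τ|
          ≤ (c * (t - τ) ^ (-ν)) * ‖u‖ :=
            mul_le_mul h1 (vext_abs_le u τ) (abs_nonneg _) (mul_nonneg hc.le hr0)
        _ ≤ c * δ ^ (-ν) * ‖u‖ := by nlinarith [mul_le_mul_of_nonneg_left h2 hc.le]
    · rw [indicator_of_notMem hτ]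
      simp only [norm_zero]
      exact indicator_nonneg (fun x _ => by positivity) τ
  · rw [integrable_indicator_iff measurableSet_Ioo]
    exact integrableOn_const measure_Ioo_lt_top.ne
  · filter_upwards [ae_ne_vol (t₀ - δ)] with τ hτne
    by_cases h1 : τ ∈ Ioo 0 (t₀ - δ)
    · have hτt₀ : τ < t₀ := by have := h1.2; linarith
      have hKc : ContinuousWithinAt (fun t => Q t τ * vext u τ) (Icc 0 1) t₀ := by
        have hpair : ContinuousWithinAt (fun t : ℝ => (t, τ)) (Icc 0 1 ∩ Ioi τ) t₀ :=
          (continuous_id.prodMk continuous_const).continuousWithinAt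
        have hmem : ((t₀, τ) : ℝ × ℝ) ∈ {p : ℝ × ℝ | 0 ≤ p.2 ∧ p.2 < p.1 ∧ p.1 ≤ 1} :=
          ⟨h1.1.le, hτt₀, ht₀.2⟩
        have hmaps : MapsTo (fun t : ℝ => (t, τ)) (Icc 0 1 ∩ Ioi τ)
            {p : ℝ × ℝ | 0 ≤ p.2 ∧ p.2 < p.1 ∧ p.1 ≤ 1} := fun t ht => ⟨h1.1.le, ht.2, ht.1.2⟩
        have hcomp : ContinuousWithinAt
            ((fun p : ℝ × ℝ => Q p.1 p.2) ∘ (fun t : ℝ => (t, τ))) (Icc 0 1 ∩ Ioi τ) t₀ :=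
          ContinuousWithinAt.comp (hQcont _ hmem) hpair hmaps
        have hcomp' : ContinuousWithinAt (fun t => Q t τ) (Icc 0 1 ∩ Ioi τ) t₀ := hcomp
        exact ((continuousWithinAt_inter (Ioi_mem_nhds hτt₀)).1 hcomp').mul
          continuousWithinAt_const
      have hev : ∀ᶠ t in nhds t₀,
          (Ioo 0 (t - δ)).indicator (fun τ' => Q t τ' * vext u τ') τ = Q t τ * vext u τ := by
        filter_upwards [Ioi_mem_nhds (show τ + δ < t₀ by linarith [h1.2])] with t ht
        exact Set.indicator_of_mem
          (show τ ∈ Ioo 0 (t - δ) from ⟨h1.1, by simp only [mem_Ioi] at ht; linarith⟩) _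
      exact hKc.congr_of_eventuallyEq (hev.filter_mono nhdsWithin_le_nhds)
        (indicator_of_mem h1 _)
    · have hev : ∀ᶠ t in nhds t₀,
          (Ioo 0 (t - δ)).indicator (fun τ' => Q t τ' * vext u τ') τ = 0 := by
        rcases le_or_gt τ 0 with h2 | h2
        · exact Eventually.of_forall fun t =>
            indicator_of_notMem (fun hmem => absurd hmem.1 (not_lt.2 h2)) _
        · have h3 : t₀ - δ < τ := by
            by_contra hcon
            push_neg at hcon
            exact h1 ⟨h2, lt_of_le_of_ne hcon hτne⟩
          filter_upwards [Iio_mem_nhds (show t₀ < τ + δ by linarith)] with t ht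
          refine indicator_of_notMem (fun hmem => ?_) _
          simp only [mem_Iio] at ht
          exact absurd hmem.2 (by linarith)
      exact continuousWithinAt_const.congr_of_eventuallyEq
        (hev.filter_mono nhdsWithin_le_nhds) hev.self_of_nhds

end Cont

section Gcont

variable {Q : ℝ → ℝ → ℝ} {c ν : ℝ}

lemma G_eq (hQcont : ContinuousOn (fun p : ℝ × ℝ => Q p.1 p.2)
      {p : ℝ × ℝ | 0 ≤ p.2 ∧ p.2 < p.1 ∧ p.1 ≤ 1})
    (u : C(Icc (0:ℝ) 1, ℝ)) {δ t : ℝ} (hδ : 0 < δ) :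
    ∫ τ, (Ioo 0 (t - δ)).indicator (fun τ' => Q t τ' * vext u τ') τ
      = ∫ τ in (0:ℝ)..(max (t - δ) 0), Q t τ * vext u τ := by
  rw [MeasureTheory.integral_indicator measurableSet_Ioo]
  rcases le_or_gt (t - δ) 0 with h | h
  · rw [Ioo_eq_empty (by simpa using h), max_eq_right h]
    simp
  · rw [max_eq_left h.le, intervalIntegral.integral_of_le h.le]
    exact setIntegral_congr_set (Ioo_ae_eq_Ioc (a := 0) (b := t - δ))

lemma g_diff_bound (hc : 0 < c) (hν0 : 0 < ν) (hν1 : ν < 1)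
    (hQcont : ContinuousOn (fun p : ℝ × ℝ => Q p.1 p.2)
      {p : ℝ × ℝ | 0 ≤ p.2 ∧ p.2 < p.1 ∧ p.1 ≤ 1})
    (hQbound : ∀ t τ : ℝ, 0 ≤ τ → τ < t → t ≤ 1 → |Q t τ| ≤ c * (t - τ) ^ (-ν))
    (u : C(Icc (0:ℝ) 1, ℝ)) {δ t : ℝ} (hδ : 0 < δ) (ht : t ∈ Icc (0:ℝ) 1) :
    |(∫ τ in (0:ℝ)..t, Q t τ * vext u τ)
        - ∫ τ in (0:ℝ)..(max (t - δ) 0), Q t τ * vext u τ|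
      ≤ c * ‖u‖ * δ ^ (1 - ν) / (1 - ν) := by
  set m := max (t - δ) 0 with hm
  have hm0 : 0 ≤ m := le_max_right _ _
  have hmt : m ≤ t := max_le (by linarith) ht.1
  have hint1 : IntervalIntegrable (fun τ => Q t τ * vext u τ) volume 0 m :=
    K_intable hc hν0 hν1 hQcont hQbound (vext_continuous u) (vext_abs_le u)
      le_rfl hm0 hmt ht.2
  have hint2 : IntervalIntegrable (fun τ => Q t τ * vext u τ) volume m t :=
    K_intable hc hν0 hν1 hQcont hQbound (vext_continuous u) (vext_abs_le u)
      hm0 hmt le_rfl ht.2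
  have hadj := intervalIntegral.integral_add_adjacent_intervals hint1 hint2
  have heq : (∫ τ in (0:ℝ)..t, Q t τ * vext u τ)
      - (∫ τ in (0:ℝ)..m, Q t τ * vext u τ) = ∫ τ in m..t, Q t τ * vext u τ := by
    rw [← hadj]; ring
  rw [heq]
  have hb := integral_abs_bound (f := fun τ => Q t τ * vext u τ)
    (φ := fun τ => (c * ‖u‖) * (t - τ) ^ (-ν)) hmt hint2
    (((sing_intable hν1 t m t).const_mul _)) ?_
  · refine hb.trans ?_
    rw [intervalIntegral.integral_const_mul, sing_val hν1 hmt le_rfl]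
    simp only [sub_self]
    rw [Real.zero_rpow (ne_of_gt (show (0:ℝ) < 1 - ν by linarith))]
    have htm : t - m ≤ δ := by
      rw [hm]
      rcases le_or_gt (t - δ) 0 with h | h
      · rw [max_eq_right h]; linarith [ht.1]
      · rw [max_eq_left h.le]; linarith
    have h2 : (t - m) ^ (1 - ν) ≤ δ ^ (1 - ν) :=
      Real.rpow_le_rpow (by linarith) htm (by linarith)
    rw [sub_zero]
    have hcM : (0:ℝ) ≤ c * ‖u‖ := mul_nonneg hc.le (norm_nonneg u)
    rw [mul_div_assoc]
    exact mul_le_mul_of_nonneg_left (div_le_div_of_nonneg_right h2 (by linarith)) hcM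
  · intro τ hτ
    have h0τ : 0 ≤ τ := hm0.trans hτ.1
    have h1 : |Q t τ| ≤ c * (t - τ) ^ (-ν) := hQbound t τ h0τ hτ.2 ht.2
    rw [abs_mul]
    have hr0 : (0:ℝ) ≤ (t - τ) ^ (-ν) := Real.rpow_nonneg (by linarith [hτ.2]) _
    calc |Q t τ| * |vext u τ|
        ≤ (c * (t - τ) ^ (-ν)) * ‖u‖ :=
          mul_le_mul h1 (vext_abs_le u τ) (abs_nonneg _) (mul_nonneg hc.le hr0)
      _ = (c * ‖u‖) * (t - τ) ^ (-ν) := by ring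

lemma g_contOn (hc : 0 < c) (hν0 : 0 < ν) (hν1 : ν < 1)
    (hQcont : ContinuousOn (fun p : ℝ × ℝ => Q p.1 p.2)
      {p : ℝ × ℝ | 0 ≤ p.2 ∧ p.2 < p.1 ∧ p.1 ≤ 1})
    (hQbound : ∀ t τ : ℝ, 0 ≤ τ → τ < t → t ≤ 1 → |Q t τ| ≤ c * (t - τ) ^ (-ν))
    (u : C(Icc (0:ℝ) 1, ℝ)) :
    ContinuousOn (fun t => ∫ τ in (0:ℝ)..t, Q t τ * vext u τ) (Icc 0 1) := by
  have hδn : ∀ n : ℕ, (0:ℝ) < ((n:ℝ) + 1)⁻¹ := fun n => by positivity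
  have huc : TendstoUniformlyOn
      (fun (n : ℕ) t => ∫ τ, (Ioo 0 (t - ((n:ℝ) + 1)⁻¹)).indicator
        (fun τ' => Q t τ' * vext u τ') τ)
      (fun t => ∫ τ in (0:ℝ)..t, Q t τ * vext u τ) atTop (Icc 0 1) := by
    rw [Metric.tendstoUniformlyOn_iff]
    intro ε hε
    have hlim : Tendsto (fun n : ℕ => c * ‖u‖ * (((n:ℝ) + 1)⁻¹) ^ (1 - ν) / (1 - ν))
        atTop (𝓝 0) := by
      have h1 : Tendsto (fun n : ℕ => ((n:ℝ) + 1)⁻¹) atTop (𝓝 0) := by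
        simpa [one_div] using tendsto_one_div_add_atTop_nhds_zero_nat (𝕜 := ℝ)
      have hne : (1:ℝ) - ν ≠ 0 := ne_of_gt (by linarith)
      have h2 : Tendsto (fun n : ℕ => (((n:ℝ) + 1)⁻¹) ^ (1 - ν)) atTop (𝓝 0) := by
        have h2' := h1.rpow_const (p := 1 - ν) (Or.inr (by linarith : (0:ℝ) ≤ 1 - ν))
        simpa [Real.zero_rpow hne] using h2'
      have h3 := (h2.const_mul (c * ‖u‖)).div_const (1 - ν)
      simpa using h3
    filter_upwards [hlim.eventually (gt_mem_nhds hε)] with n hn t ht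
    rw [Real.dist_eq, G_eq hQcont u (hδn n)]
    exact lt_of_le_of_lt (g_diff_bound hc hν0 hν1 hQcont hQbound u (hδn n) ht) hn
  exact huc.continuousOn (Eventually.of_forall fun n =>
    G_contOn hc hν0 hν1 hQcont hQbound u (hδn n)).frequently

end Gcont

lemma projIcc_coe {τ : ℝ} (h0 : 0 ≤ τ) (h1 : τ ≤ 1) :
    ((projIcc 0 1 (by norm_num : (0:ℝ) ≤ 1) τ : Icc (0:ℝ) 1) : ℝ) = τ := by
  rw [projIcc_of_mem _ ⟨h0, h1⟩]

section Iter

variable {Q : ℝ → ℝ → ℝ} {c ν : ℝ}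

lemma iter_estimate (hc : 0 < c) (hν0 : 0 < ν) (hν1 : ν < 1)
    (hQcont : ContinuousOn (fun p : ℝ × ℝ => Q p.1 p.2)
      {p : ℝ × ℝ | 0 ≤ p.2 ∧ p.2 < p.1 ∧ p.1 ≤ 1})
    (hQbound : ∀ t τ : ℝ, 0 ≤ τ → τ < t → t ≤ 1 → |Q t τ| ≤ c * (t - τ) ^ (-ν))
    (f : C(Icc (0:ℝ) 1, ℝ)) (T : C(Icc (0:ℝ) 1, ℝ) → C(Icc (0:ℝ) 1, ℝ))
    (hT : ∀ u (t : Icc (0:ℝ) 1),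
      T u t = (∫ τ in (0:ℝ)..(t:ℝ), Q t τ * vext u τ) + f t)
    {lam : ℝ} (hlam : 1 ≤ lam) (u v : C(Icc (0:ℝ) 1, ℝ)) :
    ∀ n (t : Icc (0:ℝ) 1), |(T^[n]) u t - (T^[n]) v t|
      ≤ (c * (lam ^ (ν - 1) * (1 / (1 - ν) + 1))) ^ n
          * Real.exp (lam * t) * dist u v := by
  have hlam0 : 0 < lam := lt_of_lt_of_le one_pos hlam
  have h1ν : 0 < 1 - ν := by linarith
  set q : ℝ := c * (lam ^ (ν - 1) * (1 / (1 - ν) + 1)) with hq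
  have hq0 : 0 ≤ q := by
    refine mul_nonneg hc.le (mul_nonneg (Real.rpow_nonneg hlam0.le _) ?_)
    have : (0:ℝ) < 1 / (1 - ν) := by positivity
    linarith
  intro n
  induction n with
  | zero =>
    intro t
    simp only [Function.iterate_zero, id_eq, pow_zero, one_mul]
    calc |u t - v t| ≤ dist u v := by
          rw [← Real.dist_eq]; exact ContinuousMap.dist_apply_le_dist t
      _ ≤ Real.exp (lam * t) * dist u v :=
          le_mul_of_one_le_left dist_nonneg
            (Real.one_le_exp (mul_nonneg hlam0.le t.2.1))
  | succ k ih =>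
    intro t
    have ht0 : 0 ≤ (t:ℝ) := t.2.1
    have ht1 : (t:ℝ) ≤ 1 := t.2.2
    set a := (T^[k]) u with ha
    set b := (T^[k]) v with hb
    rw [Function.iterate_succ_apply', Function.iterate_succ_apply', ← ha, ← hb, hT, hT]
    have hint_a : IntervalIntegrable (fun τ => Q t τ * vext a τ) volume 0 t :=
      K_intable hc hν0 hν1 hQcont hQbound (vext_continuous a) (vext_abs_le a)
        le_rfl ht0 le_rfl ht1
    have hint_b : IntervalIntegrable (fun τ => Q t τ * vext b τ) volume 0 t :=
      K_intable hc hν0 hν1 hQcont hQbound (vext_continuous b) (vext_abs_le b)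
        le_rfl ht0 le_rfl ht1
    have hsub : ((∫ τ in (0:ℝ)..(t:ℝ), Q t τ * vext a τ) + f t)
        - ((∫ τ in (0:ℝ)..(t:ℝ), Q t τ * vext b τ) + f t)
        = ∫ τ in (0:ℝ)..(t:ℝ), Q t τ * vext (a - b) τ := by
      have h2 : ((∫ τ in (0:ℝ)..(t:ℝ), Q t τ * vext a τ) + f t)
          - ((∫ τ in (0:ℝ)..(t:ℝ), Q t τ * vext b τ) + f t)
          = (∫ τ in (0:ℝ)..(t:ℝ), Q t τ * vext a τ)
            - (∫ τ in (0:ℝ)..(t:ℝ), Q t τ * vext b τ) := by ring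
      rw [h2, ← intervalIntegral.integral_sub hint_a hint_b]
      refine intervalIntegral.integral_congr fun τ _ => ?_
      simp [vext, mul_sub]
    rw [hsub]
    set D := dist u v with hD
    have hD0 : 0 ≤ D := dist_nonneg
    have hexp_cont : Continuous fun τ : ℝ => Real.exp (lam * τ) :=
      Real.continuous_exp.comp (continuous_const.mul continuous_id)
    have hφint : IntervalIntegrable
        (fun τ => (c * (q ^ k * D)) * ((t - τ) ^ (-ν) * Real.exp (lam * τ)))
        volume 0 t :=
      (((sing_intable hν1 t 0 t).mul_continuousOn hexp_cont.continuousOn).const_mul _)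
    have hintab : IntervalIntegrable (fun τ => Q t τ * vext (a - b) τ) volume 0 t :=
      K_intable hc hν0 hν1 hQcont hQbound (vext_continuous (a - b)) (vext_abs_le (a - b))
        le_rfl ht0 le_rfl ht1
    have hbd : ∀ τ ∈ Ico (0:ℝ) (t:ℝ), |Q t τ * vext (a - b) τ|
        ≤ (c * (q ^ k * D)) * ((t - τ) ^ (-ν) * Real.exp (lam * τ)) := by
      intro τ hτ
      have hQb : |Q t τ| ≤ c * ((t:ℝ) - τ) ^ (-ν) := hQbound t τ hτ.1 hτ.2 ht1
      have hr0 : (0:ℝ) ≤ ((t:ℝ) - τ) ^ (-ν) := Real.rpow_nonneg (by linarith [hτ.2]) _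
      have hτ1 : τ ≤ 1 := le_trans hτ.2.le ht1
      set s : Icc (0:ℝ) 1 := projIcc 0 1 (by norm_num) τ with hs
      have hsc : (s:ℝ) = τ := projIcc_coe hτ.1 hτ1
      have hvab : |vext (a - b) τ| ≤ q ^ k * Real.exp (lam * τ) * D := by
        have h6 : vext (a - b) τ = a s - b s := by
          simp [vext, hs]
        rw [h6]
        have h7 := ih s
        rw [hsc] at h7
        exact h7
      rw [abs_mul]
      calc |Q t τ| * |vext (a - b) τ|
          ≤ (c * ((t:ℝ) - τ) ^ (-ν)) * (q ^ k * Real.exp (lam * τ) * D) :=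
            mul_le_mul hQb hvab (abs_nonneg _) (mul_nonneg hc.le hr0)
        _ = (c * (q ^ k * D)) * (((t:ℝ) - τ) ^ (-ν) * Real.exp (lam * τ)) := by ring
    have hmain := integral_abs_bound ht0 hintab hφint hbd
    refine hmain.trans ?_
    rw [intervalIntegral.integral_const_mul]
    have hw := weight_bound hν0 hν1 hlam ht0 ht1
    have hc2 : 0 ≤ c * (q ^ k * D) := mul_nonneg hc.le (mul_nonneg (pow_nonneg hq0 _) hD0)
    calc (c * (q ^ k * D)) * ∫ τ in (0:ℝ)..(t:ℝ), (t - τ) ^ (-ν) * Real.exp (lam * τ)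
        ≤ (c * (q ^ k * D)) * (lam ^ (ν - 1) * (1 / (1 - ν) + 1) * Real.exp (lam * t)) :=
          mul_le_mul_of_nonneg_left hw hc2
      _ = q ^ (k + 1) * Real.exp (lam * t) * D := by
          rw [pow_succ, hq]; ring

end Iter

/-- The weakly singular Volterra integral equation of the second
kind u(t) = ∫_0^t Q(t,τ)u(τ)dτ + f(t) has a unique continuous solution on [0,1]. -/
theorem volterra_unique_solution (Q : ℝ → ℝ → ℝ) (f : C(Icc (0:ℝ) 1, ℝ))
    (c ν : ℝ) (hc : 0 < c) (hν0 : 0 < ν) (hν1 : ν < 1)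
    (hQcont : ContinuousOn (fun p : ℝ × ℝ => Q p.1 p.2)
      {p : ℝ × ℝ | 0 ≤ p.2 ∧ p.2 < p.1 ∧ p.1 ≤ 1})
    (hQbound : ∀ t τ : ℝ, 0 ≤ τ → τ < t → t ≤ 1 → |Q t τ| ≤ c * (t - τ) ^ (-ν)) :
    ∃! u : C(Icc (0:ℝ) 1, ℝ), ∀ t : Icc (0:ℝ) 1,
      u t = (∫ τ in (0:ℝ)..(t:ℝ), Q t τ * u (projIcc 0 1 (by norm_num) τ)) + f t := by
  have h1ν : (0:ℝ) < 1 - ν := by linarith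
  -- the Picard operator
  have hgc : ∀ u : C(Icc (0:ℝ) 1, ℝ),
      ContinuousOn (fun t => ∫ τ in (0:ℝ)..t, Q t τ * vext u τ) (Icc 0 1) :=
    fun u => g_contOn hc hν0 hν1 hQcont hQbound u
  let T : C(Icc (0:ℝ) 1, ℝ) → C(Icc (0:ℝ) 1, ℝ) := fun u =>
    ⟨fun t => (∫ τ in (0:ℝ)..(t:ℝ), Q (t:ℝ) τ * vext u τ) + f t,
      Continuous.add ((hgc u).restrict) f.continuous⟩
  have hT : ∀ u (t : Icc (0:ℝ) 1),
      T u t = (∫ τ in (0:ℝ)..(t:ℝ), Q (t:ℝ) τ * vext u τ) + f t := fun u t => rfl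
  -- choose the weight lam
  obtain ⟨lam, hlamq, hlam1⟩ : ∃ lam : ℝ, c * (lam ^ (ν - 1) * (1/(1-ν) + 1)) ≤ 1/2
      ∧ 1 ≤ lam := by
    have h0 : Tendsto (fun x : ℝ => x ^ (-(1 - ν))) atTop (𝓝 0) := tendsto_rpow_neg_atTop h1ν
    have htend : Tendsto (fun x : ℝ => c * (x ^ (ν - 1) * (1/(1-ν) + 1))) atTop (𝓝 0) := by
      have heq : (fun x : ℝ => c * (x ^ (ν - 1) * (1/(1-ν)+1)))
          = fun x => (c * (1/(1-ν)+1)) * x ^ (-(1 - ν)) := by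
        funext x; rw [show -(1 - ν) = ν - 1 by ring]; ring
      rw [heq]
      simpa using h0.const_mul (c * (1/(1-ν)+1))
    have hev := (htend.eventually (eventually_lt_nhds
      (show (0:ℝ) < 1/2 by norm_num))).and (eventually_ge_atTop 1)
    obtain ⟨lam, h5, h6⟩ := hev.exists
    exact ⟨lam, h5.le, h6⟩
  have hlam0 : 0 < lam := lt_of_lt_of_le one_pos hlam1
  set q : ℝ := c * (lam ^ (ν - 1) * (1 / (1 - ν) + 1)) with hqdef
  have hq0 : 0 ≤ q := by
    refine mul_nonneg hc.le (mul_nonneg (Real.rpow_nonneg hlam0.le _) ?_)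
    have : (0:ℝ) < 1 / (1 - ν) := by positivity
    linarith
  have hq1 : q < 1 := lt_of_le_of_lt hlamq (by norm_num)
  obtain ⟨n, hn⟩ : ∃ n, q ^ n < Real.exp (-lam) :=
    exists_pow_lt_of_lt_one (Real.exp_pos _) hq1
  have hKlt : q ^ n * Real.exp lam < 1 := by
    have h2 := mul_lt_mul_of_pos_right hn (Real.exp_pos lam)
    rwa [← Real.exp_add, neg_add_cancel, Real.exp_zero] at h2
  have hKR0 : 0 ≤ q ^ n * Real.exp lam :=
    mul_nonneg (pow_nonneg hq0 n) (Real.exp_pos _).le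
  set K : NNReal := Real.toNNReal (q ^ n * Real.exp lam) with hK
  have hKcoe : (K : ℝ) = q ^ n * Real.exp lam := Real.coe_toNNReal _ hKR0
  have hcontr : ContractingWith K (T^[n]) := by
    constructor
    · rw [← NNReal.coe_lt_coe, hKcoe, NNReal.coe_one]
      exact hKlt
    · refine LipschitzWith.of_dist_le_mul fun u v => ?_
      rw [ContinuousMap.dist_le (mul_nonneg (NNReal.coe_nonneg K) dist_nonneg)]
      intro t
      rw [Real.dist_eq]
      have hmain := iter_estimate hc hν0 hν1 hQcont hQbound f T hT hlam1 u v n t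
      refine hmain.trans ?_
      rw [hKcoe]
      have hexple : Real.exp (lam * t) ≤ Real.exp lam := by
        refine Real.exp_le_exp.2 ?_
        calc lam * (t:ℝ) ≤ lam * 1 := mul_le_mul_of_nonneg_left t.2.2 hlam0.le
          _ = lam := mul_one lam
      rw [← hqdef]
      exact mul_le_mul_of_nonneg_right
        (mul_le_mul_of_nonneg_left hexple (pow_nonneg hq0 n)) dist_nonneg
  haveI : Nonempty C(Icc (0:ℝ) 1, ℝ) := ⟨f⟩
  set w := ContractingWith.fixedPoint (T^[n]) hcontr with hwdef
  have hw : Function.IsFixedPt (T^[n]) w := hcontr.fixedPoint_isFixedPt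
  have hTw : T w = w := by
    have h1 : Function.IsFixedPt (T^[n]) (T w) := by
      show (T^[n]) (T w) = T w
      calc (T^[n]) (T w) = (T^[n + 1]) w := (Function.iterate_succ_apply T n w).symm
        _ = T ((T^[n]) w) := Function.iterate_succ_apply' T n w
        _ = T w := congrArg T hw
    exact (hcontr.fixedPoint_unique h1).trans (hcontr.fixedPoint_unique hw).symm
  refine ⟨w, ?_, ?_⟩
  · intro t
    conv_lhs => rw [← hTw]
    exact hT w t
  · intro y hy
    have hTy : Function.IsFixedPt T y := by
      show T y = y
      ext t
      rw [hT y t]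
      exact (hy t).symm
    exact ((hcontr.fixedPoint_unique (hTy.iterate n)).trans
      (hcontr.fixedPoint_unique hw).symm)
end

section
/- Let T, ε, M > 0, 0 < q < 1, ν = 1-q, and let δ : [0,T] → ℝ be continuous with |δ(t)| ≤ ε + (M/Γ(q)) ∫_0^t (t-τ)^{-ν} |δ(τ)| dτ for all t ∈ [0,T]. Then |δ(t)| ≤ ε E_q(M t^q) for all t ∈ [0,T], where E_q is the Mittag-Leffler function. -/
open Real Set Filter MeasureTheory intervalIntegral

/-- The two-parameter Mittag-Leffler function (real argument). -/
noncomputable def ML (q β z : ℝ) : ℝ := ∑' k : ℕ, z ^ k / Real.Gamma (q * k + β)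

lemma sg_beta {s t a : ℝ} (hs : 0 < s) (ht : 0 < t) (ha : 0 < a) :
    ∫ x in (0:ℝ)..a, (a - x) ^ (t-1) * x ^ (s-1) =
      Real.Gamma s * Real.Gamma t / Real.Gamma (s+t) * a ^ (s+t-1) := by
  have hGst : 0 < Real.Gamma (s + t) := Real.Gamma_pos_of_pos (by linarith)
  have hne : ((Real.Gamma (s+t) : ℝ) : ℂ) ≠ 0 := by exact_mod_cast hGst.ne'
  have h1 := Complex.betaIntegral_scaled (s : ℂ) (t : ℂ) ha
  have h2 := Complex.Gamma_mul_Gamma_eq_betaIntegral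
    (s := (s:ℂ)) (t := (t:ℂ)) (by simpa using hs) (by simpa using ht)
  have h3 : (∫ x in (0:ℝ)..a, (x:ℂ) ^ ((s:ℂ) - 1) * ((a:ℂ) - (x:ℂ)) ^ ((t:ℂ) - 1))
      = ((∫ x in (0:ℝ)..a, (a - x) ^ (t-1) * x ^ (s-1) : ℝ) : ℂ) := by
    rw [← intervalIntegral.integral_ofReal]
    refine intervalIntegral.integral_congr fun x hx => ?_
    rw [uIcc_of_le ha.le] at hx
    push_cast
    rw [Complex.ofReal_cpow hx.1, Complex.ofReal_cpow (by linarith [hx.2])]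
    push_cast
    ring
  rw [h3] at h1
  have hgam : Complex.Gamma ((s:ℂ) + (t:ℂ)) = ((Real.Gamma (s+t) : ℝ) : ℂ) := by
    rw [← Complex.ofReal_add, Complex.Gamma_ofReal]
  rw [hgam] at h2
  have hB : Complex.betaIntegral (s:ℂ) (t:ℂ)
      = ((Real.Gamma s * Real.Gamma t / Real.Gamma (s+t) : ℝ) : ℂ) := by
    rw [Complex.ofReal_div, Complex.ofReal_mul, ← Complex.Gamma_ofReal s,
      ← Complex.Gamma_ofReal t, eq_div_iff hne, mul_comm, ← h2]
  rw [hB, show (s:ℂ)+(t:ℂ)-1 = ((s+t-1:ℝ):ℂ) by push_cast; ring,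
    ← Complex.ofReal_cpow ha.le, ← Complex.ofReal_mul] at h1
  have h4 : (∫ x in (0:ℝ)..a, (a - x) ^ (t-1) * x ^ (s-1))
      = a ^ (s+t-1) * (Real.Gamma s * Real.Gamma t / Real.Gamma (s+t)) := by
    exact_mod_cast h1
  rw [h4]; ring

lemma sg_gamma_ratio {x q : ℝ} (hx : 0 < x) (hq0 : 0 < q) (hq1 : q < 1) :
    x * Real.Gamma x ≤ (x + q) ^ (1 - q) * Real.Gamma (x + q) := by
  have hxq : 0 < x + q := by linarith
  have hGx : 0 < Real.Gamma x := Real.Gamma_pos_of_pos hx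
  have hGxq : 0 < Real.Gamma (x + q) := Real.Gamma_pos_of_pos hxq
  have hc := Real.convexOn_log_Gamma.2 (mem_Ioi.2 hxq) (mem_Ioi.2 (by linarith : (0:ℝ) < x + q + 1))
    hq0.le (by linarith : (0:ℝ) ≤ 1 - q) (by ring)
  have hcomb : q • (x + q) + (1 - q) • (x + q + 1) = x + 1 := by
    simp only [smul_eq_mul]; ring
  rw [hcomb] at hc
  simp only [Function.comp_apply, smul_eq_mul] at hc
  rw [Real.Gamma_add_one hx.ne', Real.Gamma_add_one hxq.ne'] at hc
  have h1 : Real.log (x * Real.Gamma x)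
      ≤ Real.log (Real.Gamma (x+q)) + (1-q) * Real.log (x+q) := by
    calc Real.log (x * Real.Gamma x) ≤ q * Real.log (Real.Gamma (x+q))
          + (1-q) * Real.log ((x+q) * Real.Gamma (x+q)) := hc
    _ = Real.log (Real.Gamma (x+q)) + (1-q) * Real.log (x+q) := by
        rw [Real.log_mul hxq.ne' hGxq.ne']; ring
  have h2 : Real.log (x * Real.Gamma x) ≤ Real.log ((x+q)^(1-q) * Real.Gamma (x+q)) := by
    rw [Real.log_mul (by positivity) hGxq.ne', Real.log_rpow hxq]
    linarith
  have := Real.exp_le_exp.2 h2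
  rwa [Real.exp_log (by positivity), Real.exp_log (by positivity)] at this

lemma sg_key_ineq {q z x : ℝ} (hq0 : 0 < q) (hq1 : q < 1) (hz : 0 ≤ z)
    (hx1 : 1 ≤ x) (hB : 4 * (z + 1) ≤ (x + q) ^ q) :
    2 * z * Real.Gamma x ≤ Real.Gamma (x + q) := by
  have hx : 0 < x := by linarith
  have hxq : 0 < x + q := by linarith
  have hGx : 0 < Real.Gamma x := Real.Gamma_pos_of_pos hx
  have hGxq : 0 < Real.Gamma (x + q) := Real.Gamma_pos_of_pos hxq
  have hrat := sg_gamma_ratio hx hq0 hq1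
  set A := (x + q) ^ (1 - q) with hA
  set B := (x + q) ^ q with hB'
  have hApos : 0 < A := Real.rpow_pos_of_pos hxq _
  have hBpos : 0 < B := Real.rpow_pos_of_pos hxq _
  have hAB : A * B = x + q := by
    rw [hA, hB', ← Real.rpow_add hxq]; norm_num
  have hA_le : A ≤ x / (2 * (z + 1)) := by
    have h1 : A = (x + q) / B := by field_simp [← hAB]; exact hAB
    rw [h1, show x / (2*(z+1)) = (2*x) / (4*(z+1)) by rw [div_eq_div_iff (by positivity) (by positivity)]; ring]
    exact div_le_div₀ (by linarith) (by linarith) (by linarith) hB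
  have h2zA : 2 * z * A ≤ x := by
    calc 2 * z * A ≤ 2 * z * (x / (2 * (z + 1))) := by
          apply mul_le_mul_of_nonneg_left hA_le (by positivity)
    _ = x * (z / (z + 1)) := by field_simp
    _ ≤ x * 1 := mul_le_mul_of_nonneg_left ((div_le_one (by linarith)).2 (by linarith)) hx.le
    _ = x := mul_one x
  nlinarith [mul_le_mul_of_nonneg_right h2zA hGx.le]

lemma sg_summable {q z : ℝ} (hq0 : 0 < q) (hq1 : q < 1) (hz : 0 ≤ z) :
    Summable (fun k : ℕ => z ^ k / Real.Gamma (q * k + 1)) := by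
  apply summable_of_ratio_norm_eventually_le (r := 1/2) (by norm_num)
  have htend : Tendsto (fun k : ℕ => (q * k + 1 + q) ^ q) atTop atTop := by
    apply (tendsto_rpow_atTop hq0).comp
    apply tendsto_atTop_add_const_right
    apply tendsto_atTop_add_const_right
    exact (tendsto_natCast_atTop_atTop (R := ℝ)).const_mul_atTop hq0
  filter_upwards [htend.eventually_ge_atTop (4 * (z + 1))] with k hk
  set x : ℝ := q * k + 1 with hxdef
  have hx1 : (1:ℝ) ≤ x := by
    have : 0 ≤ q * k := mul_nonneg hq0.le (Nat.cast_nonneg k)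
    simp only [hxdef]; linarith
  have hxq : 0 < x + q := by linarith
  have hGx : 0 < Real.Gamma x := Real.Gamma_pos_of_pos (by linarith)
  have hGxq : 0 < Real.Gamma (x + q) := Real.Gamma_pos_of_pos hxq
  have hkey := sg_key_ineq hq0 hq1 hz hx1 hk
  have hexp : q * (k + 1 : ℕ) + 1 = x + q := by push_cast; simp only [hxdef]; ring
  rw [hexp]
  rw [Real.norm_eq_abs, Real.norm_eq_abs, abs_div, abs_div,
    abs_of_nonneg (pow_nonneg hz _), abs_of_nonneg (pow_nonneg hz _),
    abs_of_pos hGxq, abs_of_pos hGx]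
  rw [show (1:ℝ)/2 * (z ^ k / Real.Gamma x) = z ^ k / (2 * Real.Gamma x) by ring,
    div_le_div_iff₀ hGxq (by linarith)]
  calc z ^ (k+1) * (2 * Real.Gamma x) = z ^ k * (2 * z * Real.Gamma x) := by ring
  _ ≤ z ^ k * Real.Gamma (x + q) := mul_le_mul_of_nonneg_left hkey (pow_nonneg hz _)

noncomputable def sgA (M q : ℝ) (k : ℕ) (s : ℝ) : ℝ := M^k * s^(q*k) / Real.Gamma (q*k+1)

/-- Weakly singular Gronwall inequality. -/
theorem singular_gronwall (T ε M q ν : ℝ) (hT : 0 < T) (hε : 0 < ε) (hM : 0 < M)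
    (hq0 : 0 < q) (hq1 : q < 1) (hν : ν = 1 - q)
    (δ : ℝ → ℝ) (hδc : ContinuousOn δ (Set.Icc 0 T))
    (hineq : ∀ t ∈ Set.Icc (0:ℝ) T,
      |δ t| ≤ ε + (M / Real.Gamma q) * ∫ τ in (0:ℝ)..t, (t - τ) ^ (-ν) * |δ τ|) :
    ∀ t ∈ Set.Icc (0:ℝ) T, |δ t| ≤ ε * ML q 1 (M * t ^ q) := by
  have hGq : 0 < Real.Gamma q := Real.Gamma_pos_of_pos hq0
  have hineq' : ∀ t ∈ Set.Icc (0:ℝ) T,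
      |δ t| ≤ ε + (M / Real.Gamma q) * ∫ τ in (0:ℝ)..t, (t - τ) ^ (q-1) * |δ τ| := by
    simpa [hν, show -(1-q) = q - 1 from by ring] using hineq
  -- maximum of |δ|
  obtain ⟨x₀, hx₀, hmax⟩ := isCompact_Icc.exists_isMaxOn (α := ℝ)
    ⟨0, left_mem_Icc.2 hT.le⟩ hδc.abs
  set C : ℝ := |δ x₀| with hCdef
  have hC0 : 0 ≤ C := abs_nonneg _
  have hCb : ∀ τ ∈ Set.Icc (0:ℝ) T, |δ τ| ≤ C := fun τ hτ => hmax hτ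
  -- basics about sgA
  have hGk : ∀ k : ℕ, 0 < Real.Gamma (q * k + 1) :=
    fun k => Real.Gamma_pos_of_pos (by positivity)
  have hnn : ∀ (k : ℕ) (s : ℝ), 0 ≤ s → 0 ≤ sgA M q k s := fun k s hs =>
    div_nonneg (mul_nonneg (pow_nonneg hM.le _) (Real.rpow_nonneg hs _)) (hGk k).le
  have hcont : ∀ k : ℕ, Continuous (sgA M q k) := by
    intro k
    have hfun : sgA M q k = fun s : ℝ => M^k * s^(q*k) / Real.Gamma (q*k+1) := rfl
    rw [hfun]
    have : Continuous fun s : ℝ => s ^ (q * k) :=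
      continuous_iff_continuousAt.2 fun x => Real.continuousAt_rpow_const x _
        (Or.inr (by positivity))
    exact ((continuous_const.mul this).div_const _)
  -- kernel integrability
  have hker : ∀ t : ℝ, 0 ≤ t →
      IntervalIntegrable (fun τ => (t - τ) ^ (q-1)) volume 0 t := by
    intro t ht
    have h1 : IntervalIntegrable (fun x : ℝ => x ^ (q-1)) volume 0 t :=
      intervalIntegral.intervalIntegrable_rpow' (by linarith)
    simpa using (h1.comp_sub_left t).symm
  -- key integral computation
  have hkey : ∀ t : ℝ, 0 < t → ∀ k : ℕ,
      (M / Real.Gamma q) * ∫ τ in (0:ℝ)..t, (t - τ) ^ (q-1) * sgA M q k τ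
        = sgA M q (k+1) t := by
    intro t ht k
    have hb := sg_beta (s := q*k+1) (t := q) (a := t) (by positivity) hq0 ht
    rw [show q*(k:ℝ)+1-1 = q*k by ring] at hb
    have e1 : ∫ τ in (0:ℝ)..t, (t - τ) ^ (q-1) * sgA M q k τ
        = (M^k / Real.Gamma (q*k+1)) * ∫ τ in (0:ℝ)..t, (t - τ) ^ (q-1) * τ ^ (q*k) := by
      rw [← intervalIntegral.integral_const_mul]
      apply intervalIntegral.integral_congr
      intro τ _
      simp only [sgA]
      ring
    rw [e1, hb]
    simp only [sgA]
    push_cast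
    rw [show q*((k:ℝ)+1)+1 = q*(k:ℝ)+1+q by ring, show q*((k:ℝ)+1) = q*(k:ℝ)+1+q-1 by ring]
    have h1 : Real.Gamma (q*(k:ℝ)+1) ≠ 0 := (hGk k).ne'
    have h2 : Real.Gamma (q*(k:ℝ)+1+q) ≠ 0 :=
      (Real.Gamma_pos_of_pos (by positivity)).ne'
    field_simp
    ring
  -- main induction
  have hmain : ∀ n : ℕ, ∀ t ∈ Set.Icc (0:ℝ) T,
      |δ t| ≤ ε * (∑ k ∈ Finset.range n, sgA M q k t) + C * sgA M q n t := by
    intro n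
    induction n with
    | zero =>
      intro t ht
      simpa [sgA, Real.Gamma_one] using hCb t ht
    | succ n ih =>
      rintro t ⟨ht0, htT⟩
      rcases eq_or_lt_of_le ht0 with h0 | htpos
      · -- t = 0
        subst h0
        have hδ0 : |δ 0| ≤ ε := by
          simpa using hineq' 0 (left_mem_Icc.2 hT.le)
        have hone : sgA M q 0 0 = 1 := by
          simp [sgA, Real.Gamma_one]
        have h1 : (1:ℝ) ≤ ∑ k ∈ Finset.range (n+1), sgA M q k 0 := by
          calc (1:ℝ) = sgA M q 0 0 := hone.symm
          _ ≤ ∑ k ∈ Finset.range (n+1), sgA M q k 0 :=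
            Finset.single_le_sum (f := fun k => sgA M q k 0)
              (fun k _ => hnn k 0 le_rfl) (Finset.mem_range.2 n.succ_pos)
        nlinarith [mul_le_mul_of_nonneg_left h1 hε.le,
          mul_nonneg hC0 (hnn (n+1) 0 le_rfl)]
      · -- 0 < t
        have hsub : Set.Icc (0:ℝ) t ⊆ Set.Icc 0 T := Icc_subset_Icc le_rfl htT
        have huIcc : Set.uIcc (0:ℝ) t = Set.Icc 0 t := uIcc_of_le ht0
        set g : ℝ → ℝ := fun τ =>
          ε * (∑ k ∈ Finset.range n, sgA M q k τ) + C * sgA M q n τ with hg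
        have hgcont : Continuous g := by
          apply Continuous.add
          · exact continuous_const.mul (continuous_finset_sum _ fun k _ => hcont k)
          · exact continuous_const.mul (hcont n)
        have hint1 : IntervalIntegrable (fun τ => (t - τ) ^ (q-1) * |δ τ|) volume 0 t := by
          apply (hker t ht0).mul_continuousOn
          rw [huIcc]
          exact (hδc.mono hsub).abs
        have hint2 : IntervalIntegrable (fun τ => (t - τ) ^ (q-1) * g τ) volume 0 t :=
          (hker t ht0).mul_continuousOn hgcont.continuousOn
        have hintF : ∀ k : ℕ,
            IntervalIntegrable (fun τ => (t - τ) ^ (q-1) * sgA M q k τ) volume 0 t :=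
          fun k => (hker t ht0).mul_continuousOn (hcont k).continuousOn
        have hmono : (∫ τ in (0:ℝ)..t, (t - τ) ^ (q-1) * |δ τ|)
            ≤ ∫ τ in (0:ℝ)..t, (t - τ) ^ (q-1) * g τ := by
          apply intervalIntegral.integral_mono_on ht0 hint1 hint2
          intro τ hτ
          exact mul_le_mul_of_nonneg_left (ih τ (hsub hτ))
            (Real.rpow_nonneg (sub_nonneg.2 hτ.2) _)
        have hSc : Continuous fun τ : ℝ => ∑ k ∈ Finset.range n, sgA M q k τ :=
          continuous_finset_sum _ fun k _ => hcont k
        have hS_int : IntervalIntegrable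
            (fun τ => (t - τ) ^ (q-1) * ∑ k ∈ Finset.range n, sgA M q k τ) volume 0 t :=
          (hker t ht0).mul_continuousOn hSc.continuousOn
        have hsum_int : (∫ τ in (0:ℝ)..t, (t - τ) ^ (q-1) * ∑ k ∈ Finset.range n, sgA M q k τ)
            = ∑ k ∈ Finset.range n, ∫ τ in (0:ℝ)..t, (t - τ) ^ (q-1) * sgA M q k τ := by
          rw [← intervalIntegral.integral_finset_sum (fun k _ => hintF k)]
          exact intervalIntegral.integral_congr fun τ _ => Finset.mul_sum _ _ _
        have hsplit : ∫ τ in (0:ℝ)..t, (t - τ) ^ (q-1) * g τ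
            = ε * (∑ k ∈ Finset.range n, ∫ τ in (0:ℝ)..t, (t - τ) ^ (q-1) * sgA M q k τ)
              + C * ∫ τ in (0:ℝ)..t, (t - τ) ^ (q-1) * sgA M q n τ := by
          calc ∫ τ in (0:ℝ)..t, (t - τ) ^ (q-1) * g τ
              = ∫ τ in (0:ℝ)..t,
                (ε * ((t - τ) ^ (q-1) * ∑ k ∈ Finset.range n, sgA M q k τ)
                  + C * ((t - τ) ^ (q-1) * sgA M q n τ)) :=
              intervalIntegral.integral_congr fun τ _ => by simp only [hg]; ring
          _ = ε * (∫ τ in (0:ℝ)..t, (t - τ) ^ (q-1) * ∑ k ∈ Finset.range n, sgA M q k τ)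
                + C * ∫ τ in (0:ℝ)..t, (t - τ) ^ (q-1) * sgA M q n τ := by
              rw [intervalIntegral.integral_add (hS_int.const_mul ε) ((hintF n).const_mul C),
                intervalIntegral.integral_const_mul, intervalIntegral.integral_const_mul]
          _ = _ := by rw [hsum_int]
        have hstep : |δ t| ≤ ε + (M / Real.Gamma q) *
            (ε * (∑ k ∈ Finset.range n, ∫ τ in (0:ℝ)..t, (t - τ) ^ (q-1) * sgA M q k τ)
              + C * ∫ τ in (0:ℝ)..t, (t - τ) ^ (q-1) * sgA M q n τ) := by
          rw [← hsplit]
          calc |δ t| ≤ ε + (M / Real.Gamma q) *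
              ∫ τ in (0:ℝ)..t, (t - τ) ^ (q-1) * |δ τ| := hineq' t ⟨ht0, htT⟩
          _ ≤ _ := by
            apply add_le_add le_rfl
            exact mul_le_mul_of_nonneg_left hmono (div_nonneg hM.le hGq.le)
        have hdist : (M / Real.Gamma q) *
            (ε * (∑ k ∈ Finset.range n, ∫ τ in (0:ℝ)..t, (t - τ) ^ (q-1) * sgA M q k τ)
              + C * ∫ τ in (0:ℝ)..t, (t - τ) ^ (q-1) * sgA M q n τ)
            = ε * (∑ k ∈ Finset.range n, sgA M q (k+1) t) + C * sgA M q (n+1) t := by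
          rw [← hkey t htpos n,
            show ∑ k ∈ Finset.range n, sgA M q (k+1) t
              = (M / Real.Gamma q) * ∑ k ∈ Finset.range n,
                  ∫ τ in (0:ℝ)..t, (t - τ) ^ (q-1) * sgA M q k τ from by
                rw [Finset.mul_sum]
                exact Finset.sum_congr rfl fun k _ => (hkey t htpos k).symm]
          ring
        have hone : sgA M q 0 t = 1 := by
          simp [sgA, Real.Gamma_one]
        rw [Finset.sum_range_succ', hone]
        have hfinal := hstep
        rw [hdist] at hfinal
        linarith
  -- conclusion
  intro t ht
  have ht0 : 0 ≤ t := ht.1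
  have heq : (fun k : ℕ => sgA M q k t)
      = fun k : ℕ => (M * t^q)^k / Real.Gamma (q*k+1) := by
    funext k
    simp only [sgA]
    rw [mul_pow, ← Real.rpow_natCast (t ^ q) k, ← Real.rpow_mul ht0]
  have hz : 0 ≤ M * t^q := mul_nonneg hM.le (Real.rpow_nonneg ht0 _)
  have hsum := sg_summable hq0 hq1 hz
  have h1 : Tendsto (fun n => ∑ k ∈ Finset.range n, sgA M q k t) atTop
      (nhds (∑' k : ℕ, (M*t^q)^k / Real.Gamma (q*k+1))) := by
    rw [show (fun n => ∑ k ∈ Finset.range n, sgA M q k t)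
        = fun n => ∑ k ∈ Finset.range n, (M*t^q)^k / Real.Gamma (q*k+1) from by
      funext n; exact Finset.sum_congr rfl fun k _ => congrFun heq k]
    exact hsum.hasSum.tendsto_sum_nat
  have h2 : Tendsto (fun n : ℕ => sgA M q n t) atTop (nhds 0) := by
    rw [heq]; exact hsum.tendsto_atTop_zero
  have h3 := (h1.const_mul ε).add (h2.const_mul C)
  have h4 : |δ t| ≤ ε * (∑' k : ℕ, (M*t^q)^k / Real.Gamma (q*k+1)) + C * 0 :=
    ge_of_tendsto' h3 (fun n => hmain n t ht)
  simpa [ML] using h4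
end

section
/- Let a, d > 0 and b ∈ ℝ. Every eigenvalue μ of the boundary-value problem X'' + μX = 0 on [0,1], X(0) = 0, (aμ - b)X(1) = d X'(1) is real. -/
open MeasureTheory Complex Set

/-- For a, d > 0 (so ad > 0) and b ∈ ℝ, every eigenvalue μ of
X'' + μX = 0 on [0,1], X(0) = 0, (aμ - b)X(1) = dX'(1) is real. -/
theorem eigenvalue_real (a b d : ℝ) (ha : 0 < a) (hd : 0 < d) (μ : ℂ)
    (X X' X'' : ℝ → ℂ)
    (hX : ∀ x : ℝ, HasDerivAt X (X' x) x)
    (hX' : ∀ x : ℝ, HasDerivAt X' (X'' x) x)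
    (hode : ∀ x ∈ Set.Icc (0:ℝ) 1, X'' x + μ * X x = 0)
    (hbc0 : X 0 = 0)
    (hbc1 : ((a:ℂ) * μ - (b:ℂ)) * X 1 = (d:ℂ) * X' 1)
    (hnz : ∃ x ∈ Set.Icc (0:ℝ) 1, X x ≠ 0) :
    μ.im = 0 := by
  by_contra him
  set c : ℂ := starRingEnd ℂ μ - μ with hc
  have hcne : c ≠ 0 := by
    intro h
    apply him
    have h2 := congrArg Complex.im h
    simp [hc, Complex.sub_im, Complex.conj_im] at h2
    linarith
  set g : ℝ → ℂ := fun x => X' x * starRingEnd ℂ (X x) - X x * starRingEnd ℂ (X' x) with hgdef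
  have hXc : Continuous X := continuous_iff_continuousAt.mpr fun x => (hX x).continuousAt
  have hg : ∀ x ∈ Set.uIcc (0:ℝ) 1, HasDerivAt g (c * (X x * starRingEnd ℂ (X x))) x := by
    intro x hx
    rw [Set.uIcc_of_le (by norm_num : (0:ℝ) ≤ 1)] at hx
    have h1 : HasDerivAt g (X'' x * starRingEnd ℂ (X x) + X' x * starRingEnd ℂ (X' x)
        - (X' x * starRingEnd ℂ (X' x) + X x * starRingEnd ℂ (X'' x))) x :=
      ((hX' x).mul (hX x).star).sub ((hX x).mul (hX' x).star)
    convert h1 using 1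
    have h2 : X'' x = -μ * X x := by linear_combination hode x hx
    have h3 : starRingEnd ℂ (X'' x) = -(starRingEnd ℂ μ) * starRingEnd ℂ (X x) := by
      rw [h2]; simp
    rw [h3, h2, hc]; ring
  have hcont2 : Continuous fun x => c * (X x * starRingEnd ℂ (X x)) :=
    continuous_const.mul (hXc.mul (continuous_star.comp hXc))
  have hFTC : ∫ x in (0:ℝ)..1, c * (X x * starRingEnd ℂ (X x)) = g 1 - g 0 :=
    intervalIntegral.integral_eq_sub_of_hasDerivAt hg (hcont2.intervalIntegrable 0 1)
  have hg0 : g 0 = 0 := by simp [hgdef, hbc0]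
  set I : ℝ := ∫ x in (0:ℝ)..1, Complex.normSq (X x) with hI
  have hIeq : ∫ x in (0:ℝ)..1, c * (X x * starRingEnd ℂ (X x)) = c * I := by
    rw [intervalIntegral.integral_const_mul]
    congr 1
    simp_rw [Complex.mul_conj]
    rw [hI, intervalIntegral.integral_ofReal]
  have h1 : c * (I : ℂ) = g 1 := by rw [← hIeq, hFTC, hg0, sub_zero]
  have hconj1 : (d:ℂ) * starRingEnd ℂ (X' 1)
      = ((a:ℂ) * starRingEnd ℂ μ - (b:ℂ)) * starRingEnd ℂ (X 1) := by
    have h4 := congrArg (starRingEnd ℂ) hbc1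
    simpa [map_mul, map_sub, Complex.conj_ofReal] using h4.symm
  have hg1 : (d:ℂ) * g 1 = (a:ℂ) * (μ - starRingEnd ℂ μ) * (Complex.normSq (X 1) : ℂ) := by
    rw [← Complex.mul_conj, hgdef]
    linear_combination -(starRingEnd ℂ (X 1)) * hbc1 - X 1 * hconj1
  set N : ℝ := Complex.normSq (X 1) with hN
  have key : c * ((d:ℂ) * I + (a:ℂ) * N) = 0 := by
    calc c * ((d:ℂ) * I + (a:ℂ) * N)
        = (d:ℂ) * (c * (I:ℂ)) + c * ((a:ℂ) * N) := by ring
      _ = (d:ℂ) * g 1 + c * ((a:ℂ) * N) := by rw [h1]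
      _ = (a:ℂ) * (μ - starRingEnd ℂ μ) * (N:ℂ) + c * ((a:ℂ) * N) := by rw [hg1]
      _ = 0 := by rw [hc]; ring
  have hreal : (d:ℂ) * I + (a:ℂ) * N = 0 := by
    rcases mul_eq_zero.mp key with h | h
    · exact absurd h hcne
    · exact h
  have hrealℝ : d * I + a * N = 0 := by exact_mod_cast hreal
  have hInn : 0 ≤ I := by
    rw [hI]
    apply intervalIntegral.integral_nonneg (by norm_num : (0:ℝ) ≤ 1)
    intro x _; exact Complex.normSq_nonneg _
  have hNnn : 0 ≤ N := Complex.normSq_nonneg _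
  have hI0 : I = 0 := by nlinarith
  -- contradiction with hnz
  obtain ⟨x₀, hx₀, hXx₀⟩ := hnz
  have hfc : Continuous fun x => Complex.normSq (X x) := Complex.continuous_normSq.comp hXc
  have hfint0 : ∫ x in Set.Ioc (0:ℝ) 1, Complex.normSq (X x) = 0 := by
    rw [← intervalIntegral.integral_of_le (by norm_num : (0:ℝ) ≤ 1)]
    exact hI0
  have hsupp : IsOpen (Function.support fun x => Complex.normSq (X x)) := by
    have : (Function.support fun x => Complex.normSq (X x))
        = (fun x => Complex.normSq (X x)) ⁻¹' ({0}ᶜ) := by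
      ext y; simp [Function.mem_support]
    rw [this]
    exact isClosed_singleton.isOpen_compl.preimage hfc
  have hx₀supp : x₀ ∈ Function.support fun x => Complex.normSq (X x) := by
    simp [Function.mem_support, Complex.normSq_eq_zero, hXx₀]
  have hne : ((Function.support fun x => Complex.normSq (X x)) ∩ Set.Ioo 0 1).Nonempty := by
    have hcl : x₀ ∈ closure (Set.Ioo (0:ℝ) 1) := by
      rw [closure_Ioo (by norm_num : (0:ℝ) ≠ 1)]; exact hx₀
    exact mem_closure_iff.mp hcl _ hsupp hx₀supp
  have hpos : 0 < ∫ x in Set.Ioc (0:ℝ) 1, Complex.normSq (X x) := by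
    rw [MeasureTheory.integral_pos_iff_support_of_nonneg_ae
      (Filter.Eventually.of_forall fun x => Complex.normSq_nonneg _)
      (hfc.integrableOn_Ioc)]
    rw [Measure.restrict_apply hsupp.measurableSet]
    calc (0:ENNReal) < volume ((Function.support fun x => Complex.normSq (X x)) ∩ Set.Ioo 0 1) :=
          (hsupp.inter isOpen_Ioo).measure_pos volume hne
      _ ≤ volume ((Function.support fun x => Complex.normSq (X x)) ∩ Set.Ioc 0 1) :=
          measure_mono (Set.inter_subset_inter_right _ Set.Ioo_subset_Ioc_self)
  rw [hfint0] at hpos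
  exact lt_irrefl 0 hpos
end

section
/- Let a, d > 0 and b ∈ ℝ with -b/d < 1. Then every eigenvalue μ of the problem X'' + μX = 0, X(0) = 0, (aμ - b)X(1) = dX'(1) is strictly positive. -/
/-- First-order linear ODE uniqueness: if `g' = k g` on `[0,1]` and `g 0 = 0`,
then `g = 0` on `[0,1]`. -/
lemma eigen_aux_lemA (g g' : ℝ → ℝ) (k : ℝ) (hg : ∀ x, HasDerivAt g (g' x) x)
    (hlin : ∀ x ∈ Set.Icc (0:ℝ) 1, g' x = k * g x) (h0 : g 0 = 0) :
    ∀ x ∈ Set.Icc (0:ℝ) 1, g x = 0 := by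
  have key : ∀ x ∈ Set.Icc (0:ℝ) 1,
      g x * Real.exp (-k * x) = g 0 * Real.exp (-k * 0) := by
    apply constant_of_has_deriv_right_zero
    · exact fun x _ => ((hg x).mul
        (((hasDerivAt_id x).const_mul (-k)).exp)).continuousAt.continuousWithinAt
    · intro x hx
      have hD : HasDerivAt (fun y => g y * Real.exp (-k * y))
          (g' x * Real.exp (-k * x) + g x * (Real.exp (-k * x) * (-k * 1))) x :=
        (hg x).mul (((hasDerivAt_id x).const_mul (-k)).exp)
      have hx' : x ∈ Set.Icc (0:ℝ) 1 := Set.mem_Icc_of_Ico hx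
      have hzero : g' x * Real.exp (-k * x) + g x * (Real.exp (-k * x) * (-k * 1)) = 0 := by
        rw [hlin x hx']; ring
      rw [hzero] at hD
      exact hD.hasDerivWithinAt
  intro x hx
  have h := key x hx
  rw [h0, zero_mul] at h
  rcases mul_eq_zero.1 h with h' | h'
  · exact h'
  · exact absurd h' (ne_of_gt (Real.exp_pos _))

/-- Second-order uniqueness: if `Y'' = ω² Y` on `[0,1]` with `Y 0 = Y' 0 = 0`,
then `Y = 0` and `Y' = 0` on `[0,1]`. -/
lemma eigen_aux_lemB (Y Y' Y'' : ℝ → ℝ) (ω : ℝ) (hY : ∀ x, HasDerivAt Y (Y' x) x)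
    (hY' : ∀ x, HasDerivAt Y' (Y'' x) x)
    (hode : ∀ x ∈ Set.Icc (0:ℝ) 1, Y'' x = ω ^ 2 * Y x)
    (h0 : Y 0 = 0) (h0' : Y' 0 = 0) :
    (∀ x ∈ Set.Icc (0:ℝ) 1, Y x = 0) ∧ (∀ x ∈ Set.Icc (0:ℝ) 1, Y' x = 0) := by
  have hu : ∀ x, HasDerivAt (fun y => Y' y - ω * Y y) (Y'' x - ω * Y' x) x :=
    fun x => (hY' x).sub ((hY x).const_mul ω)
  have hu0 : ∀ x ∈ Set.Icc (0:ℝ) 1, Y' x - ω * Y x = 0 := by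
    apply eigen_aux_lemA _ _ (-ω) hu
    · intro x hx
      rw [hode x hx]; ring
    · rw [h0, h0']; ring
  have hY0 : ∀ x ∈ Set.Icc (0:ℝ) 1, Y x = 0 := by
    apply eigen_aux_lemA Y Y' ω hY _ h0
    intro x hx
    have := hu0 x hx
    linarith
  refine ⟨hY0, fun x hx => ?_⟩
  have h1 := hu0 x hx
  have h2 := hY0 x hx
  rw [h2] at h1; linarith

/-- `sinh t ≤ t * cosh t` for `t ≥ 0`. -/
lemma eigen_aux_sinh_le (t : ℝ) (ht : 0 ≤ t) : Real.sinh t ≤ t * Real.cosh t := by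
  have key : ∀ s ∈ Set.Icc 0 t, s * Real.cosh s - Real.sinh s ≥ 0 := by
    intro s hs
    have hmono : MonotoneOn (fun s => s * Real.cosh s - Real.sinh s) (Set.Icc 0 t) := by
      apply monotoneOn_of_deriv_nonneg (convex_Icc 0 t)
      · exact (Continuous.sub (continuous_id.mul Real.continuous_cosh)
          Real.continuous_sinh).continuousOn
      · intro x _
        exact (((hasDerivAt_id x).mul (Real.hasDerivAt_cosh x)).sub
          (Real.hasDerivAt_sinh x)).differentiableAt.differentiableWithinAt
      · intro x hx
        have hD : HasDerivAt (fun s => s * Real.cosh s - Real.sinh s)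
            (1 * Real.cosh x + x * Real.sinh x - Real.cosh x) x :=
          ((hasDerivAt_id x).mul (Real.hasDerivAt_cosh x)).sub (Real.hasDerivAt_sinh x)
        rw [hD.deriv]
        have hx' : x ∈ Set.Ioo (0:ℝ) t := by rwa [interior_Icc] at hx
        have hx0 : 0 < x := hx'.1
        nlinarith [Real.sinh_pos_iff.2 hx0]
    have := hmono (Set.left_mem_Icc.2 ht) hs hs.1
    simpa using this
  have := key t (Set.right_mem_Icc.2 ht)
  linarith

/-- For a, d > 0 and -b/d < 1, every eigenvalue μ of
X'' + μX = 0, X(0) = 0, (aμ - b)X(1) = dX'(1) is strictly positive. -/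
theorem eigenvalue_pos (a b d : ℝ) (ha : 0 < a) (hd : 0 < d) (hbd : -b / d < 1)
    (μ : ℝ) (X X' X'' : ℝ → ℝ)
    (hX : ∀ x : ℝ, HasDerivAt X (X' x) x)
    (hX' : ∀ x : ℝ, HasDerivAt X' (X'' x) x)
    (hode : ∀ x ∈ Set.Icc (0:ℝ) 1, X'' x + μ * X x = 0)
    (hbc0 : X 0 = 0)
    (hbc1 : (a * μ - b) * X 1 = d * X' 1)
    (hnz : ∃ x ∈ Set.Icc (0:ℝ) 1, X x ≠ 0) :
    0 < μ := by
  by_contra hμ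
  push_neg at hμ
  have hbd' : -b < d := by rwa [div_lt_one hd] at hbd
  set e := X' 0 with he
  set ω := Real.sqrt (-μ) with hω
  have hω2 : ω ^ 2 = -μ := Real.sq_sqrt (by linarith)
  have hodeX : ∀ x ∈ Set.Icc (0:ℝ) 1, X'' x = ω ^ 2 * X x := by
    intro x hx
    have := hode x hx
    rw [hω2]; linarith
  have hene : e ≠ 0 := by
    intro h0
    obtain ⟨x, hx, hXx⟩ := hnz
    exact hXx ((eigen_aux_lemB X X' X'' ω hX hX' hodeX hbc0 h0).1 x hx)
  rcases eq_or_lt_of_le hμ with hμ0 | hμneg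
  · -- μ = 0 case
    subst hμ0
    have hω0 : ω ^ 2 = 0 := by rw [hω2]; norm_num
    have hZ : ∀ x, HasDerivAt (fun y => X y - e * y) (X' x - e * 1) x :=
      fun x => (hX x).sub ((hasDerivAt_id x).const_mul e)
    have hZ' : ∀ x, HasDerivAt (fun y => X' y - e * 1) (X'' x) x :=
      fun x => (hX' x).sub_const (e * 1)
    have hB := eigen_aux_lemB (fun y => X y - e * y) (fun y => X' y - e * 1) X'' ω hZ hZ'
      (by intro x hx
          rw [hodeX x hx, hω0]; ring)
      (by simp [hbc0]) (by simp [he])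
    have hX1 : X 1 = e := by have := hB.1 1 (by norm_num); simp at this; linarith
    have hX'1 : X' 1 = e := by have := hB.2 1 (by norm_num); simp at this; linarith
    rw [hX1, hX'1] at hbc1
    have : a * 0 - b = d := mul_right_cancel₀ hene hbc1
    linarith
  · -- μ < 0 case
    have hωpos : 0 < ω := Real.sqrt_pos.2 (by linarith)
    have hZ : ∀ x, HasDerivAt (fun y => X y - e / ω * Real.sinh (ω * y))
        (X' x - e * Real.cosh (ω * x)) x := by
      intro x
      have h1 : HasDerivAt (fun y => e / ω * Real.sinh (ω * y))
          (e / ω * (Real.cosh (ω * x) * (ω * 1))) x :=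
        (((hasDerivAt_id x).const_mul ω).sinh).const_mul (e / ω)
      have h2 := (hX x).sub h1
      have h3 : X' x - e * Real.cosh (ω * x) = X' x - e / ω * (Real.cosh (ω * x) * (ω * 1)) := by
        rw [mul_one, ← mul_assoc, div_mul_eq_mul_div, div_mul_cancel₀ _ hωpos.ne']
      rw [h3]
      exact h2
    have hZ' : ∀ x, HasDerivAt (fun y => X' y - e * Real.cosh (ω * y))
        (X'' x - e * (Real.sinh (ω * x) * (ω * 1))) x :=
      fun x => (hX' x).sub ((((hasDerivAt_id x).const_mul ω).cosh).const_mul e)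
    have hB := eigen_aux_lemB (fun y => X y - e / ω * Real.sinh (ω * y))
      (fun y => X' y - e * Real.cosh (ω * y))
      (fun y => X'' y - e * (Real.sinh (ω * y) * (ω * 1))) ω hZ hZ'
      (by intro x hx
          show X'' x - e * (Real.sinh (ω * x) * (ω * 1)) =
            ω ^ 2 * (X x - e / ω * Real.sinh (ω * x))
          rw [hodeX x hx]
          field_simp)
      (by simp [hbc0]) (by simp [he])
    have hX1 : X 1 = e / ω * Real.sinh ω := by
      have := hB.1 1 (by norm_num); simp at this; linarith
    have hX'1 : X' 1 = e * Real.cosh ω := by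
      have := hB.2 1 (by norm_num); simp at this; linarith
    rw [hX1, hX'1] at hbc1
    -- cancel e
    have hcan : (a * μ - b) * (Real.sinh ω / ω) = d * Real.cosh ω := by
      have h : e * ((a * μ - b) * (Real.sinh ω / ω)) = e * (d * Real.cosh ω) := by
        field_simp at hbc1 ⊢
        linarith
      exact mul_left_cancel₀ hene h
    have hspos : 0 < Real.sinh ω := Real.sinh_pos_iff.2 hωpos
    have hcge : 1 ≤ Real.cosh ω := Real.one_le_cosh ω
    have hsle : Real.sinh ω / ω ≤ Real.cosh ω := by
      rw [div_le_iff₀ hωpos]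
      have := eigen_aux_sinh_le ω hωpos.le
      linarith [this]
    have hab : a * μ - b < d := by nlinarith
    have hdivpos : 0 < Real.sinh ω / ω := div_pos hspos hωpos
    rcases le_or_gt (a * μ - b) 0 with hK | hK
    · have h1 : (a * μ - b) * (Real.sinh ω / ω) ≤ 0 :=
        mul_nonpos_of_nonpos_of_nonneg hK hdivpos.le
      nlinarith
    · have h1 : (a * μ - b) * (Real.sinh ω / ω) ≤ (a * μ - b) * Real.cosh ω :=
        mul_le_mul_of_nonneg_left hsle hK.le
      have h2 : (a * μ - b) * Real.cosh ω < d * Real.cosh ω :=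
        mul_lt_mul_of_pos_right hab (by linarith)
      linarith
end

section
/- Let a, d > 0 and b ∈ ℝ with -b/d = 1 (i.e., b = -d). Then μ = 0 is an eigenvalue of the problem X'' + μX = 0, X(0) = 0, (aμ - b)X(1) = dX'(1), with eigenfunction X(x) = x, and every other eigenvalue is strictly positive. -/
/-- `X` (with derivative `X'` and second derivative `X''`) is an eigenfunction of
the spectral problem X'' + μX = 0, X(0) = 0, (aμ - b)X(1) = dX'(1) for eigenvalue μ. -/
def IsEigenfunction (a b d μ : ℝ) (X X' X'' : ℝ → ℝ) : Prop :=
  (∀ x : ℝ, HasDerivAt X (X' x) x) ∧ (∀ x : ℝ, HasDerivAt X' (X'' x) x) ∧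
  (∀ x ∈ Set.Icc (0:ℝ) 1, X'' x + μ * X x = 0) ∧ X 0 = 0 ∧
  (a * μ - b) * X 1 = d * X' 1 ∧ ∃ x ∈ Set.Icc (0:ℝ) 1, X x ≠ 0

/-- For a, d > 0 and b = -d, μ = 0 is an eigenvalue with
eigenfunction X(x) = x, and every other eigenvalue is strictly positive. -/
theorem eigenvalue_zero_and_pos (a b d : ℝ) (ha : 0 < a) (hd : 0 < d)
    (hb : b = -d) :
    IsEigenfunction a b d 0 (fun x => x) (fun _ => 1) (fun _ => 0) ∧
    (∀ μ : ℝ, (∃ X X' X'' : ℝ → ℝ, IsEigenfunction a b d μ X X' X'') →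
      μ ≠ 0 → 0 < μ) := by
  constructor
  · refine ⟨fun x => hasDerivAt_id x, fun x => hasDerivAt_const x 1,
      fun x _ => by ring, rfl, by rw [hb]; ring, 1, by norm_num⟩
  · rintro μ ⟨X, X', X'', hX, hX', hODE, hX0, hBC, x₀, hx₀, hXx₀⟩ hμ
    by_contra hpos
    have hμneg : μ < 0 := lt_of_le_of_ne (not_lt.mp hpos) hμ
    have cX : Continuous X := by
      rw [continuous_iff_continuousAt]; exact fun x => (hX x).continuousAt
    have cX' : Continuous X' := by
      rw [continuous_iff_continuousAt]; exact fun x => (hX' x).continuousAt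
    -- energy identity
    have h1 : ∫ x in (0:ℝ)..1, (-μ * (X x * X x) + X' x * X' x)
        = X' 1 * X 1 - X' 0 * X 0 := by
      apply intervalIntegral.integral_eq_sub_of_hasDerivAt
        (f := fun x => X' x * X x)
        (f' := fun x => -μ * (X x * X x) + X' x * X' x)
      · intro x hx
        rw [Set.uIcc_of_le (zero_le_one)] at hx
        have h := (hX' x).mul (hX x)
        have hxx : X'' x = -(μ * X x) := by
          have := hODE x hx; linarith
        exact h.congr_deriv (by simp only [hxx]; ring)
      · exact ((continuous_const.mul (cX.mul cX)).add (cX'.mul cX')).intervalIntegrable 0 1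
    -- FTC for X
    have h2 : ∫ x in (0:ℝ)..1, X' x = X 1 := by
      have := intervalIntegral.integral_eq_sub_of_hasDerivAt
        (f := X) (f' := X') (a := 0) (b := 1)
        (fun x _ => hX x) (cX'.intervalIntegrable 0 1)
      rw [this, hX0, sub_zero]
    set IA := ∫ x in (0:ℝ)..1, X x * X x with hIA
    set IB := ∫ x in (0:ℝ)..1, X' x * X' x with hIB
    have iXX : IntervalIntegrable (fun x => X x * X x) MeasureTheory.volume 0 1 :=
      (cX.mul cX).intervalIntegrable 0 1
    have iX'X' : IntervalIntegrable (fun x => X' x * X' x) MeasureTheory.volume 0 1 :=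
      (cX'.mul cX').intervalIntegrable 0 1
    -- split energy identity
    have h1' : -μ * IA + IB = X' 1 * X 1 := by
      have hsplit : ∫ x in (0:ℝ)..1, (-μ * (X x * X x) + X' x * X' x)
          = (∫ x in (0:ℝ)..1, -μ * (X x * X x)) + IB :=
        intervalIntegral.integral_add (iXX.const_mul _) iX'X'
      rw [hsplit, intervalIntegral.integral_const_mul] at h1
      rw [hX0] at h1
      simpa using h1
    -- Cauchy-Schwarz style bound: IB ≥ (X 1)^2
    have h3 : 0 ≤ IB - (X 1) ^ 2 := by
      have hnn : 0 ≤ ∫ x in (0:ℝ)..1, (X' x - X 1) ^ 2 :=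
        intervalIntegral.integral_nonneg zero_le_one (fun x _ => sq_nonneg _)
      have hexp : ∫ x in (0:ℝ)..1, (X' x - X 1) ^ 2
          = IB - (2 * X 1) * (∫ x in (0:ℝ)..1, X' x) + (X 1)^2 * 1 := by
        have : (fun x => (X' x - X 1) ^ 2)
            = fun x => (X' x * X' x - (2 * X 1) * X' x) + (X 1)^2 := by
          funext x; ring
        rw [this, intervalIntegral.integral_add
            (iX'X'.sub ((cX'.intervalIntegrable 0 1).const_mul _))
            (intervalIntegrable_const),
          intervalIntegral.integral_sub iX'X'
            ((cX'.intervalIntegrable 0 1).const_mul _),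
          intervalIntegral.integral_const_mul, intervalIntegral.integral_const]
        simp [hIB]
      rw [hexp, h2] at hnn
      nlinarith [hnn]
    -- IA > 0
    have h4 : 0 < IA := by
      rw [hIA, intervalIntegral.integral_pos_iff_support_of_nonneg_ae
        (Filter.Eventually.of_forall (fun x => mul_self_nonneg (X x))) iXX]
      refine ⟨zero_lt_one, ?_⟩
      set U : Set ℝ := {x | X x ≠ 0} with hU
      have hUopen : IsOpen U := isOpen_ne_fun cX continuous_const
      have hmeet : (U ∩ Set.Ioo 0 1).Nonempty := by
        have hx₀cl : x₀ ∈ closure (Set.Ioo (0:ℝ) 1) := by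
          rw [closure_Ioo (by norm_num : (0:ℝ) ≠ 1)]; exact hx₀
        rcases mem_closure_iff.mp hx₀cl U hUopen hXx₀ with ⟨y, hyU, hyI⟩
        exact ⟨y, hyU, hyI⟩
      have hsub : U ∩ Set.Ioo 0 1 ⊆ Function.support (fun x => X x * X x) ∩ Set.Ioc 0 1 := by
        rintro x ⟨hxU, hxI⟩
        exact ⟨mul_ne_zero hxU hxU, Set.Ioo_subset_Ioc_self hxI⟩
      calc (0:ENNReal) < MeasureTheory.volume (U ∩ Set.Ioo 0 1) :=
            (hUopen.inter isOpen_Ioo).measure_pos _ hmeet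
        _ ≤ _ := MeasureTheory.measure_mono hsub
    -- boundary condition
    have hBC' : (a * μ + d) * X 1 = d * X' 1 := by rw [← hBC, hb]; ring
    -- combine: d*IB - d*(X 1)^2 = μ*(d*IA + a*(X 1)^2)
    have h5 : (a * μ + d) * X 1 * X 1 = d * X' 1 * X 1 := by rw [hBC']
    have h6 : d * (-μ * IA + IB) = d * (X' 1 * X 1) := by rw [h1']
    have h7 : 0 < -μ * (d * IA) := mul_pos (neg_pos.mpr hμneg) (mul_pos hd h4)
    have h8 : μ * (a * (X 1 ^ 2)) ≤ 0 :=
      mul_nonpos_of_nonpos_of_nonneg hμneg.le (mul_nonneg ha.le (sq_nonneg _))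
    have h9 : 0 ≤ d * (IB - X 1 ^ 2) := mul_nonneg hd.le h3
    nlinarith [h5, h6, h7, h8, h9]
end

section
/- Let a, d > 0, b ∈ ℝ, and let μ₁ ≠ μ₂ be two eigenvalues of the problem X'' + μX = 0, X(0)=0, (aμ-b)X(1) = dX'(1), with eigenfunctions X₁, X₂. Then ∫_0^1 X₁(x)X₂(x) dx + (a/d) X₁(1) X₂(1) = 0. -/
/-- Eigenfunctions for distinct eigenvalues of the spectral problem
X'' + μX = 0, X(0)=0, (aμ-b)X(1) = dX'(1) are orthogonal with respect to the
modified inner product ⟨f,g⟩ = ∫_0^1 f g dx + (a/d) f(1) g(1). -/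
theorem eigenfunctions_orthogonal (a b d : ℝ) (ha : 0 < a) (hd : 0 < d)
    (μ₁ μ₂ : ℝ) (hμ : μ₁ ≠ μ₂)
    (X₁ X₁' X₁'' X₂ X₂' X₂'' : ℝ → ℝ)
    (hX₁ : ∀ x : ℝ, HasDerivAt X₁ (X₁' x) x)
    (hX₁' : ∀ x : ℝ, HasDerivAt X₁' (X₁'' x) x)
    (hX₂ : ∀ x : ℝ, HasDerivAt X₂ (X₂' x) x)
    (hX₂' : ∀ x : ℝ, HasDerivAt X₂' (X₂'' x) x)
    (hode₁ : ∀ x ∈ Set.Icc (0:ℝ) 1, X₁'' x + μ₁ * X₁ x = 0)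
    (hode₂ : ∀ x ∈ Set.Icc (0:ℝ) 1, X₂'' x + μ₂ * X₂ x = 0)
    (hbc0₁ : X₁ 0 = 0) (hbc0₂ : X₂ 0 = 0)
    (hbc1₁ : (a * μ₁ - b) * X₁ 1 = d * X₁' 1)
    (hbc1₂ : (a * μ₂ - b) * X₂ 1 = d * X₂' 1)
    (hnz₁ : ∃ x ∈ Set.Icc (0:ℝ) 1, X₁ x ≠ 0)
    (hnz₂ : ∃ x ∈ Set.Icc (0:ℝ) 1, X₂ x ≠ 0) :
    (∫ x in (0:ℝ)..1, X₁ x * X₂ x) + (a / d) * X₁ 1 * X₂ 1 = 0 := by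
  set W : ℝ → ℝ := fun x => X₁' x * X₂ x - X₁ x * X₂' x with hW
  have hcont : Continuous fun x => (μ₂ - μ₁) * (X₁ x * X₂ x) := by
    apply Continuous.mul continuous_const
    exact (continuous_iff_continuousAt.2 fun x => (hX₁ x).continuousAt).mul
      (continuous_iff_continuousAt.2 fun x => (hX₂ x).continuousAt)
  have hderiv : ∀ x ∈ Set.uIcc (0:ℝ) 1, HasDerivAt W ((μ₂ - μ₁) * (X₁ x * X₂ x)) x := by
    intro x hx
    rw [Set.uIcc_of_le (by norm_num : (0:ℝ) ≤ 1)] at hx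
    have h1 := ((hX₁' x).mul (hX₂ x)).sub ((hX₁ x).mul (hX₂' x))
    have e1 : X₁'' x = -(μ₁ * X₁ x) := by linarith [hode₁ x hx]
    have e2 : X₂'' x = -(μ₂ * X₂ x) := by linarith [hode₂ x hx]
    exact h1.congr_deriv (by rw [e1, e2]; ring)
  have hint : IntervalIntegrable (fun x => (μ₂ - μ₁) * (X₁ x * X₂ x))
      MeasureTheory.volume 0 1 := hcont.intervalIntegrable 0 1
  have hftc := intervalIntegral.integral_eq_sub_of_hasDerivAt hderiv hint
  rw [intervalIntegral.integral_const_mul] at hftc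
  have hW0 : W 0 = 0 := by simp [hW, hbc0₁, hbc0₂]
  have hW1 : d * W 1 = a * (μ₁ - μ₂) * (X₁ 1 * X₂ 1) := by
    have : d * W 1 = (d * X₁' 1) * X₂ 1 - X₁ 1 * (d * X₂' 1) := by simp [hW]; ring
    rw [this, ← hbc1₁, ← hbc1₂]; ring
  have hd' : d ≠ 0 := ne_of_gt hd
  have hμ' : μ₂ - μ₁ ≠ 0 := sub_ne_zero.2 (Ne.symm hμ)
  have key : d * ((μ₂ - μ₁) * ∫ x in (0:ℝ)..1, X₁ x * X₂ x)
      = a * (μ₁ - μ₂) * (X₁ 1 * X₂ 1) := by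
    rw [hftc, hW0, sub_zero, hW1]
  have key2 : (μ₂ - μ₁) * (d * (∫ x in (0:ℝ)..1, X₁ x * X₂ x) + a * (X₁ 1 * X₂ 1)) = 0 := by
    linear_combination key
  have key3 := (mul_eq_zero.1 key2).resolve_left hμ'
  field_simp
  linarith [key3]
end
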